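/- arXiv:1602.02299 — 5 statements merged into one kernel-verified Lean document; each statement's English description precedes it below -/
import Mathlib

section
/- Let k, M ≥ 1 be integers, let S be the set of leaves of an M-ary tree of height k (i.e., a [k,M]-system), and let X ⊆ S satisfy |X| ≥ ε·M^k for some ε > 0. Then there exists an integer m ≥ ε·M/k and a [k,m]-system S′ with S′ ⊆ X. -/
/-- An `M`-ary tree of height `k`: a prefix-closed set of finite sequences of length
at most `k`, containing the empty sequence, such that every element of length `< k`
has exactly `M` direct continuations. -/
def IsMAryTree (M k : ℕ) (T : Set (List ℕ)) : Prop :=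
  ([] : List ℕ) ∈ T ∧
  (∀ a ∈ T, a.length ≤ k) ∧
  (∀ a ∈ T, ∀ i ≤ a.length, a.take i ∈ T) ∧
  (∀ a ∈ T, a.length < k →
    {σ : ℕ | a ++ [σ] ∈ T}.Finite ∧ {σ : ℕ | a ++ [σ] ∈ T}.ncard = M)

/-- The leaves of a tree of height `k`: its elements of length `k`. -/
def leaves (k : ℕ) (T : Set (List ℕ)) : Set (List ℕ) := {a ∈ T | a.length = k}

/-- A `[k,M]`-system: the set of leaves of some `M`-ary tree of height `k`. -/
def IsSystem (k M : ℕ) (S : Set (List ℕ)) : Prop :=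
  ∃ T : Set (List ℕ), IsMAryTree M k T ∧ S = leaves k T

namespace TreeAux

/-- The subtree below the child `σ` of the root. -/
def sub (σ : ℕ) (T : Set (List ℕ)) : Set (List ℕ) := {a | σ :: a ∈ T}

lemma mem_sub {σ : ℕ} {T : Set (List ℕ)} {a : List ℕ} : a ∈ sub σ T ↔ σ :: a ∈ T := Iff.rfl

lemma subtree {M k : ℕ} {T : Set (List ℕ)} (hT : IsMAryTree M (k + 1) T)
    {σ : ℕ} (hσ : [σ] ∈ T) : IsMAryTree M k (sub σ T) := by
  obtain ⟨h0, hlen, htake, hcont⟩ := hT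
  refine ⟨hσ, ?_, ?_, ?_⟩
  · intro a ha
    have := hlen _ ha
    simpa using this
  · intro a ha i hi
    have := htake _ ha (i + 1) (by simpa using Nat.succ_le_succ hi)
    simpa [mem_sub, List.take_succ_cons] using this
  · intro a ha hlt
    have h := hcont (σ :: a) ha (by simpa using Nat.succ_lt_succ hlt)
    have he : {τ : ℕ | a ++ [τ] ∈ sub σ T} = {τ : ℕ | (σ :: a) ++ [τ] ∈ T} := rfl
    rw [he]; exact h

lemma sub_empty {M k : ℕ} {T : Set (List ℕ)} (hT : IsMAryTree M k T)
    {σ : ℕ} (hσ : [σ] ∉ T) : sub σ T = ∅ := by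
  ext a
  simp only [mem_sub, Set.mem_empty_iff_false, iff_false]
  intro h
  exact hσ (by simpa using hT.2.2.1 _ h 1 (by simp))

lemma leaves_sub {k σ : ℕ} {T : Set (List ℕ)} :
    leaves k (sub σ T) = sub σ (leaves (k + 1) T) := by
  ext a
  constructor
  · rintro ⟨ha, hl⟩
    exact ⟨ha, by simp [hl]⟩
  · rintro ⟨ha, hl⟩
    exact ⟨ha, by simpa using hl⟩

lemma children {M k : ℕ} {T : Set (List ℕ)} (hT : IsMAryTree M (k + 1) T) :
    {σ : ℕ | [σ] ∈ T}.Finite ∧ {σ : ℕ | [σ] ∈ T}.ncard = M := by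
  have := hT.2.2.2 [] hT.1 (Nat.succ_pos k)
  simpa using this

/-- Decomposition of a subset of the leaves along the children of the root. -/
lemma decomp {M k : ℕ} {T X : Set (List ℕ)} (hT : IsMAryTree M (k + 1) T)
    (hX : X ⊆ leaves (k + 1) T) :
    X ⊆ ⋃ σ ∈ {σ : ℕ | [σ] ∈ T}, (σ :: ·) '' (sub σ X) := by
  intro x hx
  obtain ⟨hxT, hxlen⟩ := hX hx
  cases x with
  | nil => simp at hxlen
  | cons y ys =>
    have hy : [y] ∈ T := by
      have := hT.2.2.1 _ hxT 1 (by simp)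
      simpa using this
    refine Set.mem_biUnion hy ⟨ys, hx, rfl⟩

lemma ncard_le_sum {α : Type*} {X : Set α} (C : Finset ℕ) (f : ℕ → Set α)
    (hf : ∀ σ, (f σ).Finite) (hsub : X ⊆ ⋃ σ ∈ C, f σ) :
    X.ncard ≤ ∑ σ ∈ C, (f σ).ncard := by
  classical
  have hXfin : X.Finite :=
    ((C.finite_toSet.biUnion (fun σ _ => hf σ))).subset hsub
  have hss : hXfin.toFinset ⊆ C.biUnion (fun σ => (hf σ).toFinset) := by
    intro x hx
    rw [Set.Finite.mem_toFinset] at hx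
    obtain ⟨s, ⟨σ, rfl⟩, hs⟩ := hsub hx
    simp only [Set.mem_iUnion, exists_prop] at hs
    obtain ⟨hσC, hxf⟩ := hs
    exact Finset.mem_biUnion.2 ⟨σ, hσC, (Set.Finite.mem_toFinset _).2 hxf⟩
  calc X.ncard = hXfin.toFinset.card := Set.ncard_eq_toFinset_card X hXfin
    _ ≤ (C.biUnion (fun σ => (hf σ).toFinset)).card := Finset.card_le_card hss
    _ ≤ ∑ σ ∈ C, ((hf σ).toFinset).card := Finset.card_biUnion_le
    _ = ∑ σ ∈ C, (f σ).ncard := by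
        refine Finset.sum_congr rfl fun σ _ => ?_
        exact (Set.ncard_eq_toFinset_card (f σ) (hf σ)).symm

lemma leaves_bound : ∀ (k M : ℕ) (T : Set (List ℕ)), IsMAryTree M k T →
    (leaves k T).Finite ∧ (leaves k T).ncard ≤ M ^ k := by
  intro k
  induction k with
  | zero =>
    intro M T hT
    have h : leaves 0 T ⊆ {([] : List ℕ)} := by
      intro a ha
      simpa using List.length_eq_zero_iff.1 ha.2
    exact ⟨(Set.finite_singleton _).subset h,
      le_trans (Set.ncard_le_ncard h (Set.finite_singleton _)) (by simp)⟩
  | succ k ih =>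
    intro M T hT
    obtain ⟨hCfin, hCcard⟩ := children hT
    set C := {σ : ℕ | [σ] ∈ T} with hCdef
    have hfσ : ∀ σ : ℕ, (leaves k (sub σ T)).Finite := by
      intro σ
      by_cases hσ : [σ] ∈ T
      · exact (ih M (sub σ T) (subtree hT hσ)).1
      · rw [sub_empty hT hσ]
        have : leaves k (∅ : Set (List ℕ)) = ∅ := by simp [leaves]
        rw [this]; exact Set.finite_empty
    have hf : ∀ σ : ℕ, ((σ :: ·) '' (leaves k (sub σ T))).Finite :=
      fun σ => (hfσ σ).image _
    have hsub : leaves (k + 1) T ⊆ ⋃ σ ∈ hCfin.toFinset, (σ :: ·) '' (leaves k (sub σ T)) := by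
      intro x hx
      have := decomp hT (le_refl (leaves (k + 1) T)) hx
      obtain ⟨s, ⟨σ, rfl⟩, hs⟩ := this
      simp only [Set.mem_iUnion, exists_prop] at hs
      obtain ⟨hσC, b, hb, rfl⟩ := hs
      have hbl : b ∈ leaves k (sub σ T) := by
        rw [leaves_sub]; exact hb
      exact Set.mem_biUnion (hCfin.mem_toFinset.2 hσC) ⟨b, hbl, rfl⟩
    have hfin : (leaves (k + 1) T).Finite := by
      refine Set.Finite.subset ?_ hsub
      exact (hCfin.toFinset.finite_toSet.biUnion (fun σ _ => hf σ))
    refine ⟨hfin, ?_⟩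
    calc (leaves (k + 1) T).ncard
        ≤ ∑ σ ∈ hCfin.toFinset, ((σ :: ·) '' (leaves k (sub σ T))).ncard :=
          ncard_le_sum _ _ hf hsub
      _ ≤ ∑ _σ ∈ hCfin.toFinset, M ^ k := by
          refine Finset.sum_le_sum fun σ hσ => ?_
          rw [Set.ncard_image_of_injective _ (fun a b h => by simpa using h)]
          have hσT : [σ] ∈ T := hCfin.mem_toFinset.1 hσ
          exact (ih M (sub σ T) (subtree hT hσT)).2
      _ = M * M ^ k := by
          rw [Finset.sum_const, smul_eq_mul]
          congr 1
          rw [← hCcard, Set.ncard_eq_toFinset_card _ hCfin]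
      _ = M ^ (k + 1) := by ring

lemma key : ∀ (k M m : ℕ) (T X : Set (List ℕ)), IsMAryTree M k T → X ⊆ leaves k T →
    (¬ ∃ S', IsSystem k m S' ∧ S' ⊆ X) → X.ncard ≤ k * (m - 1) * M ^ (k - 1) := by
  intro k
  induction k with
  | zero =>
    intro M m T X hT hX hno
    have hXe : X = ∅ := by
      by_contra h
      obtain ⟨x, hx⟩ := Set.nonempty_iff_ne_empty.2 h
      have hx0 : x = [] := List.length_eq_zero_iff.1 (hX hx).2
      subst hx0
      apply hno
      have htree : IsMAryTree m 0 {([] : List ℕ)} := by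
        refine ⟨rfl, ?_, ?_, ?_⟩
        · rintro a rfl; simp
        · rintro a rfl i hi; simpa using hi
        · rintro a rfl h; simp at h
      refine ⟨leaves 0 {([] : List ℕ)}, ⟨{([] : List ℕ)}, htree, rfl⟩, ?_⟩
      intro a ha
      have : a = [] := List.length_eq_zero_iff.1 ha.2
      subst this; exact hx
    simp [hXe]
  | succ k ih =>
    intro M m T X hT hX hno
    classical
    obtain ⟨hCfin, hCcard⟩ := children hT
    have hXfin : X.Finite := (leaves_bound _ M T hT).1.subset hX
    have hconsinj : ∀ σ : ℕ, Function.Injective (σ :: · : List ℕ → List ℕ) :=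
      fun σ a b h => by simpa using h
    have hsubfin : ∀ σ : ℕ, (sub σ X).Finite := by
      intro σ
      have he : sub σ X = (σ :: ·) ⁻¹' X := rfl
      rw [he]
      exact hXfin.preimage ((hconsinj σ).injOn)
    set G := {σ : ℕ | [σ] ∈ T ∧ ∃ S', IsSystem k m S' ∧ S' ⊆ sub σ X} with hGdef
    have hGsub : G ⊆ {σ : ℕ | [σ] ∈ T} := fun σ hσ => hσ.1
    have hGfin : G.Finite := hCfin.subset hGsub
    -- Main claim: G has at most m - 1 elements
    have hGle : G.ncard ≤ m - 1 := by
      by_contra hcon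
      have hm : m ≤ G.ncard := by omega
      obtain ⟨G₀, hG₀sub, hG₀card⟩ := Set.exists_subset_card_eq hm
      have hG₀fin : G₀.Finite := hGfin.subset hG₀sub
      have hsel : ∀ σ : ℕ, ∃ T' : Set (List ℕ),
          σ ∈ G₀ → (IsMAryTree m k T' ∧ leaves k T' ⊆ sub σ X) := by
        intro σ
        by_cases hσ : σ ∈ G₀
        · obtain ⟨S', ⟨T', hT', rfl⟩, hS'X⟩ := (hG₀sub hσ).2
          exact ⟨T', fun _ => ⟨hT', hS'X⟩⟩
        · exact ⟨∅, fun h => absurd h hσ⟩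
      choose F hF using hsel
      set T' : Set (List ℕ) := insert [] (⋃ σ ∈ G₀, (σ :: ·) '' F σ) with hT'def
      have hmemT' : ∀ x : List ℕ, x ∈ T' ↔ x = [] ∨ ∃ σ ∈ G₀, ∃ b ∈ F σ, σ :: b = x := by
        intro x
        simp [hT'def, Set.mem_insert_iff, Set.mem_iUnion]
      have htree' : IsMAryTree m (k + 1) T' := by
        refine ⟨Set.mem_insert _ _, ?_, ?_, ?_⟩
        · intro a ha
          rcases (hmemT' a).1 ha with rfl | ⟨σ, hσ, b, hb, rfl⟩
          · simp
          · have := (hF σ hσ).1.2.1 b hb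
            simp; omega
        · intro a ha i hi
          rcases (hmemT' a).1 ha with rfl | ⟨σ, hσ, b, hb, rfl⟩
          · rw [List.take_nil]
            exact (hmemT' []).2 (Or.inl rfl)
          · cases i with
            | zero =>
              rw [List.take_zero]
              exact (hmemT' []).2 (Or.inl rfl)
            | succ j =>
              rw [List.take_succ_cons]
              refine (hmemT' _).2 (Or.inr ⟨σ, hσ, b.take j, ?_, rfl⟩)
              refine (hF σ hσ).1.2.2.1 b hb j ?_
              simpa using hi
        · intro a ha hlen
          rcases (hmemT' a).1 ha with rfl | ⟨σ, hσ, b, hb, rfl⟩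
          · have hset : {τ : ℕ | [] ++ [τ] ∈ T'} = G₀ := by
              ext τ
              simp only [List.nil_append, Set.mem_setOf_eq]
              rw [hmemT']
              constructor
              · rintro (h | ⟨σ, hσ, b, hb, heq⟩)
                · simp at h
                · obtain ⟨rfl, rfl⟩ := List.cons_eq_cons.1 heq
                  exact hσ
              · intro hτ
                exact Or.inr ⟨τ, hτ, [], (hF τ hτ).1.1, rfl⟩
            rw [hset]
            exact ⟨hG₀fin, hG₀card⟩
          · have hblen : b.length < k := by simpa using hlen
            have hset : {τ : ℕ | (σ :: b) ++ [τ] ∈ T'} = {τ : ℕ | b ++ [τ] ∈ F σ} := by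
              ext τ
              simp only [List.cons_append, Set.mem_setOf_eq]
              rw [hmemT']
              constructor
              · rintro (h | ⟨σ', hσ', c, hc, heq⟩)
                · simp at h
                · obtain ⟨rfl, rfl⟩ := List.cons_eq_cons.1 heq
                  exact hc
              · intro h
                exact Or.inr ⟨σ, hσ, b ++ [τ], h, rfl⟩
            rw [hset]
            exact (hF σ hσ).1.2.2.2 b hb hblen
      apply hno
      refine ⟨leaves (k + 1) T', ⟨T', htree', rfl⟩, ?_⟩
      intro x hx
      obtain ⟨hxT', hxlen⟩ := hx
      rcases (hmemT' x).1 hxT' with rfl | ⟨σ, hσ, b, hb, rfl⟩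
      · simp at hxlen
      · have hbk : b.length = k := by simpa using hxlen
        have : b ∈ leaves k (F σ) := ⟨hb, hbk⟩
        exact (hF σ hσ).2 this
    -- Counting
    have hdec : X ⊆ ⋃ σ ∈ hCfin.toFinset, (σ :: ·) '' (sub σ X) := by
      intro x hx
      obtain ⟨s, ⟨σ, rfl⟩, hs⟩ := decomp hT hX hx
      simp only [Set.mem_iUnion, exists_prop] at hs
      obtain ⟨hσC, hxf⟩ := hs
      exact Set.mem_biUnion (hCfin.mem_toFinset.2 hσC) hxf
    have hGfinset : hCfin.toFinset.filter (· ∈ G) ⊆ hGfin.toFinset := by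
      intro σ hσ
      exact hGfin.mem_toFinset.2 (Finset.mem_filter.1 hσ).2
    calc X.ncard
        ≤ ∑ σ ∈ hCfin.toFinset, ((σ :: ·) '' (sub σ X)).ncard :=
          ncard_le_sum _ _ (fun σ => (hsubfin σ).image _) hdec
      _ = ∑ σ ∈ hCfin.toFinset, (sub σ X).ncard := by
          refine Finset.sum_congr rfl fun σ _ => ?_
          exact Set.ncard_image_of_injective _ (hconsinj σ)
      _ ≤ ∑ σ ∈ hCfin.toFinset,
            (k * (m - 1) * M ^ (k - 1) + if σ ∈ G then M ^ k else 0) := by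
          refine Finset.sum_le_sum fun σ hσ => ?_
          have hσT : [σ] ∈ T := hCfin.mem_toFinset.1 hσ
          have hsubleaves : sub σ X ⊆ leaves k (sub σ T) := by
            intro a ha
            rw [leaves_sub]
            exact hX ha
          by_cases hσG : σ ∈ G
          · simp only [hσG, if_pos]
            have h1 : (sub σ X).ncard ≤ (leaves k (sub σ T)).ncard :=
              Set.ncard_le_ncard hsubleaves (leaves_bound k M _ (subtree hT hσT)).1
            have h2 := (leaves_bound k M _ (subtree hT hσT)).2
            omega
          · have hnosys : ¬ ∃ S', IsSystem k m S' ∧ S' ⊆ sub σ X :=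
              fun hsys => hσG ⟨hσT, hsys⟩
            have := ih M m (sub σ T) (sub σ X) (subtree hT hσT) hsubleaves hnosys
            simp only [hσG, if_neg, not_false_iff]
            omega
      _ = hCfin.toFinset.card * (k * (m - 1) * M ^ (k - 1)) +
            ∑ σ ∈ hCfin.toFinset, (if σ ∈ G then M ^ k else 0) := by
          rw [Finset.sum_add_distrib, Finset.sum_const, smul_eq_mul]
      _ ≤ M * (k * (m - 1) * M ^ (k - 1)) + (m - 1) * M ^ k := by
          have hc1 : hCfin.toFinset.card = M := by
            rw [← hCcard, Set.ncard_eq_toFinset_card _ hCfin]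
          have hc2 : ∑ σ ∈ hCfin.toFinset, (if σ ∈ G then M ^ k else 0)
              = (hCfin.toFinset.filter (· ∈ G)).card * M ^ k := by
            rw [← Finset.sum_filter, Finset.sum_const, smul_eq_mul]
          have hc3 : (hCfin.toFinset.filter (· ∈ G)).card ≤ m - 1 := by
            calc (hCfin.toFinset.filter (· ∈ G)).card
                ≤ hGfin.toFinset.card := Finset.card_le_card hGfinset
              _ = G.ncard := (Set.ncard_eq_toFinset_card _ hGfin).symm
              _ ≤ m - 1 := hGle
          rw [hc1, hc2]
          exact Nat.add_le_add_left (Nat.mul_le_mul_right _ hc3) _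
      _ ≤ (k + 1) * (m - 1) * M ^ ((k + 1) - 1) := by
          rcases k with _ | j
          · simp
          · simp only [Nat.add_sub_cancel]
            have : M * ((j + 1) * (m - 1) * M ^ j) + (m - 1) * M ^ (j + 1)
                = (j + 1 + 1) * (m - 1) * M ^ (j + 1) := by ring
            omega

end TreeAux


theorem stmt0 (k M : ℕ) (hk : 1 ≤ k) (hM : 1 ≤ M) (S X : Set (List ℕ))
    (hS : IsSystem k M S) (hX : X ⊆ S) (ε : ℝ) (hε : 0 < ε)
    (hcard : ε * (M : ℝ) ^ k ≤ (X.ncard : ℝ)) :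
    ∃ m : ℕ, ε * (M : ℝ) / (k : ℝ) ≤ (m : ℝ) ∧
      ∃ S' : Set (List ℕ), IsSystem k m S' ∧ S' ⊆ X := by
  classical
  obtain ⟨T, hT, rfl⟩ := hS
  set n := X.ncard with hn
  have hMpow : (0 : ℝ) < (M : ℝ) ^ k := by positivity
  have hnpos : 0 < n := by
    by_contra h
    have hn0 : n = 0 := by omega
    rw [hn0] at hcard
    push_cast at hcard
    nlinarith
  set q := k * M ^ (k - 1) with hq
  have hqpos : 0 < q := Nat.mul_pos hk (pow_pos hM _)
  set m := (n - 1) / q + 1 with hm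
  have hbound : k * (m - 1) * M ^ (k - 1) < n := by
    have h1 : (n - 1) / q * q ≤ n - 1 := Nat.div_mul_le_self _ _
    have hm1 : m - 1 = (n - 1) / q := by simp [hm]
    calc k * (m - 1) * M ^ (k - 1) = (m - 1) * q := by rw [hq]; ring
      _ = (n - 1) / q * q := by rw [hm1]
      _ ≤ n - 1 := h1
      _ < n := by omega
  have hsys : ∃ S', IsSystem k m S' ∧ S' ⊆ X := by
    by_contra h
    exact absurd (TreeAux.key k M m T X hT hX h) (by omega)
  have hnm : n ≤ m * q := by
    have hdm := Nat.div_add_mod (n - 1) q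
    have hmod := Nat.mod_lt (n - 1) hqpos
    have hmq : m * q = (n - 1) / q * q + q := by rw [hm]; ring
    have hcomm : q * ((n - 1) / q) = (n - 1) / q * q := Nat.mul_comm _ _
    omega
  refine ⟨m, ?_, hsys⟩
  have hkpos : (0 : ℝ) < (k : ℝ) := by exact_mod_cast hk
  rw [div_le_iff₀ hkpos]
  have hMpow1 : (0 : ℝ) < (M : ℝ) ^ (k - 1) := by positivity
  have hpow : (M : ℝ) ^ k = (M : ℝ) * (M : ℝ) ^ (k - 1) := by
    conv_lhs => rw [show k = (k - 1) + 1 by omega]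
    ring
  have hchain : ε * (M : ℝ) * (M : ℝ) ^ (k - 1) ≤ ((m : ℝ) * (k : ℝ)) * (M : ℝ) ^ (k - 1) := by
    calc ε * (M : ℝ) * (M : ℝ) ^ (k - 1) = ε * (M : ℝ) ^ k := by rw [hpow]; ring
      _ ≤ (n : ℝ) := hcard
      _ ≤ ((m * q : ℕ) : ℝ) := by exact_mod_cast hnm
      _ = ((m : ℝ) * (k : ℝ)) * (M : ℝ) ^ (k - 1) := by push_cast [hq]; ring
  exact le_of_mul_le_mul_right hchain hMpow1
end

section
/- For every colouring φ of the edges of the complete graph K_5 with colours from {1,2,3}, there exists a triangle whose multiset of edge colours is not an element of the palette P = {{1,1,2}, {2,2,3}, {3,3,1}}. -/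
def okB (a b c : Fin 3) : Bool :=
  (a.val + b.val + c.val == 1) || (a.val + b.val + c.val == 4)

def toF (n : ℕ) : Fin 3 := match n with
  | 1 => 0
  | 2 => 1
  | _ => 2

set_option maxHeartbeats 10000000 in
lemma key : ∀ e01 e02 e03 e04 e12 e13 e14 e23 e24 e34 : Fin 3,
    okB e01 e02 e12 = false ∨ okB e01 e03 e13 = false ∨ okB e01 e04 e14 = false ∨
    okB e02 e03 e23 = false ∨ okB e02 e04 e24 = false ∨ okB e03 e04 e34 = false ∨
    okB e12 e13 e23 = false ∨ okB e12 e14 e24 = false ∨ okB e13 e14 e34 = false ∨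
    okB e23 e24 e34 = false := by decide

lemma transfer (a b c : ℕ) (ha : a ∈ ({1,2,3} : Set ℕ)) (hb : b ∈ ({1,2,3} : Set ℕ))
    (hc : c ∈ ({1,2,3} : Set ℕ)) (h : okB (toF a) (toF b) (toF c) = false) :
    ({a, b, c} : Multiset ℕ) ∉ ({{1, 1, 2}, {2, 2, 3}, {3, 3, 1}} : Set (Multiset ℕ)) := by
  simp only [Set.mem_insert_iff, Set.mem_singleton_iff] at ha hb hc ⊢
  rcases ha with rfl | rfl | rfl <;> rcases hb with rfl | rfl | rfl <;>
    rcases hc with rfl | rfl | rfl <;> revert h <;> decide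

theorem stmt6 (φ : Fin 5 → Fin 5 → ℕ) (hsymm : ∀ x y, φ x y = φ y x)
    (hcol : ∀ x y : Fin 5, x ≠ y → φ x y ∈ ({1, 2, 3} : Set ℕ)) :
    ∃ x y z : Fin 5, x ≠ y ∧ x ≠ z ∧ y ≠ z ∧
      ({φ x y, φ x z, φ y z} : Multiset ℕ) ∉
        ({{1, 1, 2}, {2, 2, 3}, {3, 3, 1}} : Set (Multiset ℕ)) := by
  have h := key (toF (φ 0 1)) (toF (φ 0 2)) (toF (φ 0 3)) (toF (φ 0 4)) (toF (φ 1 2))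
    (toF (φ 1 3)) (toF (φ 1 4)) (toF (φ 2 3)) (toF (φ 2 4)) (toF (φ 3 4))
  rcases h with h | h | h | h | h | h | h | h | h | h
  · exact ⟨0, 1, 2, by decide, by decide, by decide,
      transfer _ _ _ (hcol 0 1 (by decide)) (hcol 0 2 (by decide)) (hcol 1 2 (by decide)) h⟩
  · exact ⟨0, 1, 3, by decide, by decide, by decide,
      transfer _ _ _ (hcol 0 1 (by decide)) (hcol 0 3 (by decide)) (hcol 1 3 (by decide)) h⟩
  · exact ⟨0, 1, 4, by decide, by decide, by decide,
      transfer _ _ _ (hcol 0 1 (by decide)) (hcol 0 4 (by decide)) (hcol 1 4 (by decide)) h⟩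
  · exact ⟨0, 2, 3, by decide, by decide, by decide,
      transfer _ _ _ (hcol 0 2 (by decide)) (hcol 0 3 (by decide)) (hcol 2 3 (by decide)) h⟩
  · exact ⟨0, 2, 4, by decide, by decide, by decide,
      transfer _ _ _ (hcol 0 2 (by decide)) (hcol 0 4 (by decide)) (hcol 2 4 (by decide)) h⟩
  · exact ⟨0, 3, 4, by decide, by decide, by decide,
      transfer _ _ _ (hcol 0 3 (by decide)) (hcol 0 4 (by decide)) (hcol 3 4 (by decide)) h⟩
  · exact ⟨1, 2, 3, by decide, by decide, by decide,
      transfer _ _ _ (hcol 1 2 (by decide)) (hcol 1 3 (by decide)) (hcol 2 3 (by decide)) h⟩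
  · exact ⟨1, 2, 4, by decide, by decide, by decide,
      transfer _ _ _ (hcol 1 2 (by decide)) (hcol 1 4 (by decide)) (hcol 2 4 (by decide)) h⟩
  · exact ⟨1, 3, 4, by decide, by decide, by decide,
      transfer _ _ _ (hcol 1 3 (by decide)) (hcol 1 4 (by decide)) (hcol 3 4 (by decide)) h⟩
  · exact ⟨2, 3, 4, by decide, by decide, by decide,
      transfer _ _ _ (hcol 2 3 (by decide)) (hcol 2 4 (by decide)) (hcol 3 4 (by decide)) h⟩
end

section
/- For every integer r ≥ 2, a reduced hypergraph A contains an [r,2]-fortress if and only if A contains a clique of order 2^r. -/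
/-- For `c ∈ T`, the set `Q(c)` of sequences `d` of the same length as `c` such that
for each `i`, the `i`-th entry of `d` is a successor of `c|(i-1)` in `T` different
from the `i`-th entry of `c`. -/
def Qset (T : Set (List ℕ)) (c : List ℕ) : Set (List ℕ) :=
  {d | d.length = c.length ∧
    ∀ i < c.length, (c.take i ++ [d.getD i 0]) ∈ T ∧ d.getD i 0 ≠ c.getD i 0}

/-- The longest common initial segment of two finite sequences. -/
def lcis : List ℕ → List ℕ → List ℕ
  | x :: xs, y :: ys => if x = y then x :: lcis xs ys else []
  | _, _ => []

/-- A reduced hypergraph: an index set `I`, for each pair of distinct indices a finite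
nonempty vertex class `P i j = P j i` (disjoint for distinct pairs), and for each triple
of distinct indices a tripartite 3-uniform hypergraph (its constituent) with vertex
classes `P i j`, `P i k`, `P j k`; `Edg i j k p q r` says that `{p, q, r}` with
`p ∈ P i j`, `q ∈ P i k`, `r ∈ P j k` is a hyperedge of the constituent. -/
structure ReducedHypergraph (I V : Type*) where
  P : I → I → Set V
  Pfin : ∀ i j, (P i j).Finite
  Pne : ∀ i j, i ≠ j → (P i j).Nonempty
  Psymm : ∀ i j, P i j = P j i
  Pdisj : ∀ i j k l, i ≠ j → k ≠ l → ({i, j} : Set I) ≠ {k, l} → Disjoint (P i j) (P k l)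
  Edg : I → I → I → V → V → V → Prop
  Edg_mem : ∀ i j k p q r, Edg i j k p q r → p ∈ P i j ∧ q ∈ P i k ∧ r ∈ P j k
  Edg_symm12 : ∀ i j k p q r, Edg i j k p q r → Edg j i k p r q
  Edg_symm23 : ∀ i j k p q r, Edg i j k p q r → Edg i k j q p r

/-- A `[k,M]`-system, given by the leaves of the tree `T` labelled injectively into the
index set via `e`, supports a fortress in `A` if there is a choice of vertices
`Pv a b d ∈ P (e a) (e b)` for distinct leaves `a, b` and `d ∈ Q(a ∧ b)`, such that
for all distinct leaves `a, b, c` with `s := |a ∧ b| = |a ∧ c| < |b ∧ c|` and all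
`d ∈ Q(b ∧ c)` with `d(s+1) = a(s+1)`, the triple
`{Pv a b (d|s), Pv a c (d|s), Pv b c d}` is a hyperedge of the constituent on
`(e a, e b, e c)`. -/
def SupportsFortress {I V : Type*} (A : ReducedHypergraph I V) (k M : ℕ)
    (T : Set (List ℕ)) (e : List ℕ → I) : Prop :=
  IsMAryTree M k T ∧ Set.InjOn e (leaves k T) ∧
  ∃ Pv : List ℕ → List ℕ → List ℕ → V,
    (∀ a ∈ leaves k T, ∀ b ∈ leaves k T, a ≠ b → ∀ d ∈ Qset T (lcis a b),
        Pv a b d ∈ A.P (e a) (e b) ∧ Pv a b d = Pv b a d) ∧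
    (∀ a ∈ leaves k T, ∀ b ∈ leaves k T, ∀ c ∈ leaves k T,
      a ≠ b → a ≠ c → b ≠ c →
      (lcis a b).length = (lcis a c).length →
      (lcis a b).length < (lcis b c).length →
      ∀ d ∈ Qset T (lcis b c),
        d.getD (lcis a b).length 0 = a.getD (lcis a b).length 0 →
        A.Edg (e a) (e b) (e c)
          (Pv a b (d.take (lcis a b).length))
          (Pv a c (d.take (lcis a b).length))
          (Pv b c d))

/-- `A` contains a `[k,M]`-fortress if some `[k,M]`-system in its index set supports a
fortress. -/
def ContainsFortress {I V : Type*} (A : ReducedHypergraph I V) (k M : ℕ) : Prop :=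
  ∃ (T : Set (List ℕ)) (e : List ℕ → I), SupportsFortress A k M T e

/-- `A` contains a clique of order `t`: a set `J` of `t` indices together with one vertex
`f i j ∈ P i j` for each pair of distinct `i, j ∈ J` such that all triples of chosen
vertices are hyperedges of the corresponding constituents. -/
def HasClique {I V : Type*} (A : ReducedHypergraph I V) (t : ℕ) : Prop :=
  ∃ (J : Finset I) (f : I → I → V), J.card = t ∧ (∀ i j, f i j = f j i) ∧
    (∀ i ∈ J, ∀ j ∈ J, i ≠ j → f i j ∈ A.P i j) ∧
    (∀ i ∈ J, ∀ j ∈ J, ∀ k ∈ J, i ≠ j → i ≠ k → j ≠ k →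
      A.Edg i j k (f i j) (f i k) (f j k))


section Aux

open List

lemma lcis_comm : ∀ a b : List ℕ, lcis a b = lcis b a
  | x :: xs, y :: ys => by
    by_cases h : x = y
    · subst h; simp [lcis, lcis_comm xs ys]
    · simp [lcis, h, Ne.symm h]
  | [], [] => rfl
  | [], _ :: _ => rfl
  | _ :: _, [] => rfl

lemma lcis_prefix : ∀ a b : List ℕ, lcis a b <+: a
  | x :: xs, y :: ys => by
    by_cases h : x = y
    · subst h; simpa [lcis] using (lcis_prefix xs ys)
    · simp [lcis, h]
  | [], [] => by simp [lcis]
  | [], _ :: _ => by simp [lcis]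
  | _ :: _, [] => by simp [lcis]

lemma lcis_prefix' (a b : List ℕ) : lcis a b <+: b := lcis_comm a b ▸ lcis_prefix b a

lemma lcis_take (a b : List ℕ) : lcis a b = a.take (lcis a b).length :=
  List.prefix_iff_eq_take.mp (lcis_prefix a b)

lemma lcis_take' (a b : List ℕ) : lcis a b = b.take (lcis a b).length :=
  List.prefix_iff_eq_take.mp (lcis_prefix' a b)

lemma lcis_length_le (a b : List ℕ) : (lcis a b).length ≤ a.length :=
  (lcis_prefix a b).length_le

lemma lcis_lt_of_ne : ∀ a b : List ℕ, a.length = b.length → a ≠ b →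
    (lcis a b).length < a.length
  | x :: xs, y :: ys, hl, hne => by
    by_cases h : x = y
    · subst h
      have : xs ≠ ys := fun h => hne (by rw [h])
      simpa [lcis] using lcis_lt_of_ne xs ys (by simpa using hl) this
    · simp [lcis, h]
  | [], [], _, hne => absurd rfl hne
  | [], _ :: _, hl, _ => by simp at hl
  | _ :: _, [], hl, _ => by simp at hl

lemma lcis_getD_ne : ∀ a b : List ℕ, (lcis a b).length < a.length →
    (lcis a b).length < b.length →
    a.getD (lcis a b).length 0 ≠ b.getD (lcis a b).length 0
  | x :: xs, y :: ys, h1, h2 => by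
    by_cases h : x = y
    · subst h
      have h1' : (lcis xs ys).length < xs.length := by
        simp only [lcis, if_pos rfl] at h1; simpa using h1
      have h2' : (lcis xs ys).length < ys.length := by
        simp only [lcis, if_pos rfl] at h2; simpa using h2
      simp only [lcis, if_pos rfl]
      simpa using lcis_getD_ne xs ys h1' h2'
    · simpa [lcis, h] using h
  | [], _, h1, _ => by simp at h1
  | _ :: _, [], _, h2 => by simp at h2

lemma lcis_eq_of : ∀ (s : ℕ) (a b : List ℕ), a.take s = b.take s → s < a.length →
    s < b.length → a.getD s 0 ≠ b.getD s 0 → lcis a b = a.take s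
  | 0, x :: xs, y :: ys, _, _, _, hne => by
    simp only [List.getD] at hne
    simp only [lcis]
    rw [if_neg (by simpa using hne)]
    simp
  | s + 1, x :: xs, y :: ys, ht, h1, h2, hne => by
    simp only [List.take_succ_cons, List.cons.injEq] at ht
    obtain ⟨rfl, ht⟩ := ht
    simp only [lcis, if_pos rfl, if_true, eq_self_iff_true, List.take_succ_cons,
      List.cons.injEq, true_and]
    exact lcis_eq_of s xs ys ht (by simpa using h1) (by simpa using h2)
      (by simpa using hne)
  | _, [], _, _, h1, _, _ => by simp at h1
  | _, _ :: _, [], _, _, h2, _ => by simp at h2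

lemma getD_eq_of_take_eq {a b : List ℕ} {s i : ℕ} (h : a.take s = b.take s) (hi : i < s) :
    a.getD i 0 = b.getD i 0 := by
  rw [List.getD_eq_getElem?_getD, List.getD_eq_getElem?_getD]
  have h2 : a[i]? = b[i]? := by
    have := congrArg (fun l => l[i]?) h
    simpa [List.getElem?_take, hi] using this
  rw [h2]

lemma eq_take_append_getD {a : List ℕ} {n : ℕ} (h : a.length = n + 1) :
    a = a.take n ++ [a.getD n 0] := by
  conv_lhs => rw [← List.take_length (l := a), h, List.take_succ]
  have : n < a.length := by omega
  rw [List.getD_eq_getElem?_getD, List.getElem?_eq_getElem this]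
  simp

lemma take_succ_eq {c : List ℕ} {i : ℕ} (h : i < c.length) :
    c.take (i + 1) = c.take i ++ [c.getD i 0] := by
  rw [List.take_succ, List.getD_eq_getElem?_getD, List.getElem?_eq_getElem h]
  simp

lemma getD_take_eq {d : List ℕ} {s i : ℕ} (hi : i < s) :
    (d.take s).getD i 0 = d.getD i 0 := by
  rw [List.getD_eq_getElem?_getD, List.getD_eq_getElem?_getD, List.getElem?_take, if_pos hi]

section Tree

variable {M k : ℕ} {T : Set (List ℕ)}

lemma take_mem (hT : IsMAryTree M k T) {a : List ℕ} (ha : a ∈ T) (i : ℕ) :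
    a.take i ∈ T := by
  rcases le_or_gt i a.length with h | h
  · exact hT.2.2.1 a ha i h
  · rwa [List.take_of_length_le h.le]

lemma succ_spec (hT : IsMAryTree M k T) {c : List ℕ} (hc : c ∈ T) {i : ℕ}
    (hi : i < c.length) :
    {τ : ℕ | c.take i ++ [τ] ∈ T}.Finite ∧ {τ : ℕ | c.take i ++ [τ] ∈ T}.ncard = M ∧
      c.getD i 0 ∈ {τ : ℕ | c.take i ++ [τ] ∈ T} := by
  have hlen : c.length ≤ k := hT.2.1 c hc
  have hm : c.take i ∈ T := take_mem hT hc i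
  have hl : (c.take i).length = i := by simp; omega
  obtain ⟨h1, h2⟩ := hT.2.2.2 _ hm (by omega)
  refine ⟨h1, h2, ?_⟩
  show c.take i ++ [c.getD i 0] ∈ T
  rw [← take_succ_eq hi]
  exact take_mem hT hc _

lemma two_unique {S : Set ℕ} (h2 : S.ncard = 2) {x y z : ℕ} (hx : x ∈ S) (hy : y ∈ S)
    (hz : z ∈ S) (hyx : y ≠ x) (hzx : z ≠ x) : y = z := by
  obtain ⟨a, b, hab, rfl⟩ := Set.ncard_eq_two.mp h2
  simp only [Set.mem_insert_iff, Set.mem_singleton_iff] at hx hy hz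
  rcases hx with rfl | rfl <;> rcases hy with rfl | rfl <;> rcases hz with rfl | rfl <;>
    simp_all

lemma not_three_distinct {S : Set ℕ} (h2 : S.ncard = 2) {x y z : ℕ} (hx : x ∈ S)
    (hy : y ∈ S) (hz : z ∈ S) (hxy : x ≠ y) (hxz : x ≠ z) (hyz : y ≠ z) : False := by
  obtain ⟨a, b, hab, rfl⟩ := Set.ncard_eq_two.mp h2
  simp only [Set.mem_insert_iff, Set.mem_singleton_iff] at hx hy hz
  rcases hx with rfl | rfl <;> rcases hy with rfl | rfl <;> rcases hz with rfl | rfl <;>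
    simp_all

lemma Qset_nonempty (hT : IsMAryTree 2 k T) {c : List ℕ} (hc : c ∈ T) :
    (Qset T c).Nonempty := by
  classical
  have hex : ∀ i < c.length, ∃ σ, σ ∈ {τ : ℕ | c.take i ++ [τ] ∈ T} ∧ σ ≠ c.getD i 0 := by
    intro i hi
    obtain ⟨h1, h2, _⟩ := succ_spec hT hc hi
    obtain ⟨b, hb, hbne⟩ := Set.exists_ne_of_one_lt_ncard (by rw [h2]; norm_num) (c.getD i 0)
    exact ⟨b, hb, hbne⟩
  set g : ℕ → ℕ := fun i => if h : i < c.length then (hex i h).choose else 0 with hg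
  refine ⟨(List.range c.length).map g, by simp, ?_⟩
  intro i hi
  have hgd : ((List.range c.length).map g).getD i 0 = g i := by
    rw [List.getD_eq_getElem?_getD, List.getElem?_map, List.getElem?_range hi]
    rfl
  rw [hgd, hg]
  simp only [dif_pos hi]
  exact ⟨(hex i hi).choose_spec.1, (hex i hi).choose_spec.2⟩

lemma Qset_unique (hT : IsMAryTree 2 k T) {c : List ℕ} (hc : c ∈ T) {d d' : List ℕ}
    (hd : d ∈ Qset T c) (hd' : d' ∈ Qset T c) : d = d' := by
  obtain ⟨hdl, hdp⟩ := hd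
  obtain ⟨hdl', hdp'⟩ := hd'
  apply List.ext_getElem (by omega)
  intro i hi hi'
  have hic : i < c.length := by omega
  obtain ⟨h1, h2, h3⟩ := succ_spec hT hc hic
  obtain ⟨m1, n1⟩ := hdp i hic
  obtain ⟨m2, n2⟩ := hdp' i hic
  have := two_unique h2 h3 m1 m2 n1 n2
  rwa [List.getD_eq_getElem _ _ hi, List.getD_eq_getElem _ _ hi'] at this

lemma Qset_take {c d : List ℕ} {s : ℕ} (hd : d ∈ Qset T c) (hs : s ≤ c.length) :
    d.take s ∈ Qset T (c.take s) := by
  obtain ⟨hdl, hdp⟩ := hd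
  constructor
  · simp; omega
  · intro i hi
    have his : i < s := by simpa [hs] using hi
    have hic : i < c.length := by omega
    rw [List.take_take, min_eq_left his.le, getD_take_eq his, getD_take_eq his]
    exact hdp i hic

lemma level_card (hT : IsMAryTree M k T) :
    ∀ n ≤ k, ∃ F : Finset (List ℕ),
      (↑F : Set (List ℕ)) = {a ∈ T | a.length = n} ∧ F.card = M ^ n := by
  classical
  intro n
  induction n with
  | zero =>
    intro _
    refine ⟨{[]}, ?_, by simp⟩
    ext a
    simp only [Finset.coe_singleton, Set.mem_singleton_iff, Set.mem_setOf_eq]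
    constructor
    · rintro rfl; exact ⟨hT.1, rfl⟩
    · rintro ⟨_, ha⟩; exact List.length_eq_zero_iff.mp ha
  | succ n ih =>
    intro hnk
    obtain ⟨F, hF, hFc⟩ := ih (by omega)
    have hmem : ∀ b ∈ F, b ∈ T ∧ b.length = n := by
      intro b hb
      have : b ∈ (↑F : Set (List ℕ)) := hb
      rw [hF] at this; exact this
    have hsucc : ∀ b ∈ F, {σ : ℕ | b ++ [σ] ∈ T}.Finite ∧
        {σ : ℕ | b ++ [σ] ∈ T}.ncard = M := by
      intro b hb
      exact hT.2.2.2 b (hmem b hb).1 (by rw [(hmem b hb).2]; omega)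
    set sf : List ℕ → Finset ℕ := fun b =>
      if h : b ∈ F then (hsucc b h).1.toFinset else ∅ with hsf
    have hsf_mem : ∀ b, b ∈ F → ∀ σ : ℕ, (σ ∈ sf b ↔ b ++ [σ] ∈ T) := by
      intro b hb σ
      show σ ∈ (if h : b ∈ F then (hsucc b h).1.toFinset else ∅) ↔ _
      rw [dif_pos hb, Set.Finite.mem_toFinset]
      rfl
    have hsf_card : ∀ b, b ∈ F → (sf b).card = M := by
      intro b hb
      show (if h : b ∈ F then (hsucc b h).1.toFinset else ∅).card = M
      rw [dif_pos hb, ← Set.ncard_eq_toFinset_card _ (hsucc b hb).1]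
      exact (hsucc b hb).2
    set G : Finset (List ℕ) := F.biUnion (fun b => (sf b).image (fun σ => b ++ [σ])) with hG
    have htake : ∀ (b : List ℕ) (σ : ℕ), b ∈ F → (b ++ [σ]).take n = b := by
      intro b σ hb
      rw [← (hmem b hb).2]
      simp
    refine ⟨G, ?_, ?_⟩
    · ext a
      simp only [hG, Finset.coe_biUnion, Set.mem_iUnion, Finset.mem_coe,
        Finset.mem_image, Set.mem_setOf_eq]
      constructor
      · rintro ⟨b, hb, σ, hσ, rfl⟩
        rw [hsf_mem b hb σ] at hσ
        exact ⟨hσ, by simp [(hmem b hb).2]⟩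
      · rintro ⟨haT, hal⟩
        have hbT : a.take n ∈ T := hT.2.2.1 a haT n (by omega)
        have hbl : (a.take n).length = n := by simp [hal]
        have hbF : a.take n ∈ F := by
          have : a.take n ∈ (↑F : Set (List ℕ)) := by rw [hF]; exact ⟨hbT, hbl⟩
          exact this
        refine ⟨a.take n, hbF, a.getD n 0, ?_, (eq_take_append_getD hal).symm⟩
        rw [hsf_mem _ hbF, ← eq_take_append_getD hal]
        exact haT
    · rw [hG, Finset.card_biUnion, pow_succ]
      · rw [← hFc, Finset.card_eq_sum_ones F, Finset.sum_mul, one_mul]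
        apply Finset.sum_congr rfl
        intro b hb
        rw [Finset.card_image_of_injective _ (fun x y h => by simpa using h)]
        exact hsf_card b hb
      · intro x hx y hy hxy
        simp only [Finset.disjoint_left, Finset.mem_image]
        rintro a ⟨σ, _, rfl⟩ ⟨τ, _, hcon⟩
        refine (hxy ?_).elim
        rw [← htake x σ hx, ← hcon, htake y τ hy]

lemma lcis_trans {a b c : List ℕ} (hab : a ≠ b) (hl1 : a.length = b.length)
    (h : (lcis a b).length < (lcis b c).length) : lcis a c = lcis a b := by
  have hsa : (lcis a b).length < a.length := lcis_lt_of_ne a b hl1 hab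
  have hsb : (lcis a b).length < b.length := by rw [← hl1]; exact hsa
  have hsc : (lcis a b).length < c.length := lt_of_lt_of_le h (lcis_prefix' b c).length_le
  have hbc_take : b.take (lcis b c).length = c.take (lcis b c).length :=
    (lcis_take b c).symm.trans (lcis_take' b c)
  have htak : a.take (lcis a b).length = c.take (lcis a b).length := by
    have h1 : a.take (lcis a b).length = b.take (lcis a b).length :=
      (lcis_take a b).symm.trans (lcis_take' a b)
    have h2 : b.take (lcis a b).length = c.take (lcis a b).length := by
      have := congrArg (List.take (lcis a b).length) hbc_take
      rwa [List.take_take, List.take_take, min_eq_left h.le] at this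
    rw [h1, h2]
  have hgd : a.getD (lcis a b).length 0 ≠ c.getD (lcis a b).length 0 := by
    have h1 := lcis_getD_ne a b hsa hsb
    have h2 : b.getD (lcis a b).length 0 = c.getD (lcis a b).length 0 :=
      getD_eq_of_take_eq hbc_take h
    exact fun he => h1 (he.trans h2.symm)
  exact (lcis_eq_of _ a c htak hsa hsc hgd).trans (lcis_take a b).symm

lemma three_point (hT : IsMAryTree 2 k T) {a b c : List ℕ}
    (ha : a ∈ leaves k T) (hb : b ∈ leaves k T) (hc : c ∈ leaves k T)
    (hab : a ≠ b) (hac : a ≠ c) (hbc : b ≠ c) :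
    ((lcis a b).length = (lcis a c).length ∧ (lcis a b).length < (lcis b c).length) ∨
    ((lcis b a).length = (lcis b c).length ∧ (lcis b a).length < (lcis a c).length) ∨
    ((lcis c a).length = (lcis c b).length ∧ (lcis c a).length < (lcis a b).length) := by
  obtain ⟨haT, hal⟩ := ha
  obtain ⟨hbT, hbl⟩ := hb
  obtain ⟨hcT, hcl⟩ := hc
  have hlab : a.length = b.length := by rw [hal, hbl]
  have hlac : a.length = c.length := by rw [hal, hcl]
  have hlbc : b.length = c.length := by rw [hbl, hcl]
  rcases lt_trichotomy (lcis a b).length (lcis b c).length with h | h | h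
  · left
    have := lcis_trans hab hlab h
    exact ⟨by rw [this], h⟩
  · rcases lt_trichotomy (lcis a c).length (lcis a b).length with h2 | h2 | h2
    · exfalso
      have hcb : (lcis c b).length = (lcis b c).length := by rw [lcis_comm]
      have h3 : (lcis a c).length < (lcis c b).length := by rw [hcb, ← h]; exact h2
      have := lcis_trans hac hlac h3
      have h4 := congrArg List.length this
      omega
    · exfalso
      have hsa : (lcis a b).length < a.length := lcis_lt_of_ne a b hlab hab
      have hsb : (lcis a b).length < b.length := by rw [← hlab]; exact hsa
      have hsc : (lcis a b).length < c.length := by rw [← hlac]; exact hsa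
      have htab : a.take (lcis a b).length = b.take (lcis a b).length :=
        (lcis_take a b).symm.trans (lcis_take' a b)
      have htac : a.take (lcis a b).length = c.take (lcis a b).length := by
        have := (lcis_take a c).symm.trans (lcis_take' a c)
        rwa [h2] at this
      obtain ⟨_, hS2, hSa⟩ := succ_spec hT haT hsa
      have hSb : b.getD (lcis a b).length 0 ∈
          {τ : ℕ | a.take (lcis a b).length ++ [τ] ∈ T} := by
        have := (succ_spec hT hbT hsb).2.2
        rwa [← htab] at this
      have hSc : c.getD (lcis a b).length 0 ∈
          {τ : ℕ | a.take (lcis a b).length ++ [τ] ∈ T} := by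
        have := (succ_spec hT hcT hsc).2.2
        rwa [← htac] at this
      have d1 : a.getD (lcis a b).length 0 ≠ b.getD (lcis a b).length 0 :=
        lcis_getD_ne a b hsa hsb
      have d2 : a.getD (lcis a b).length 0 ≠ c.getD (lcis a b).length 0 := by
        have := lcis_getD_ne a c (by rw [h2]; exact hsa) (by rw [h2]; exact hsc)
        rwa [h2] at this
      have d3 : b.getD (lcis a b).length 0 ≠ c.getD (lcis a b).length 0 := by
        have := lcis_getD_ne b c (by rw [← h]; exact hsb) (by rw [← h]; exact hsc)
        rwa [← h] at this
      exact not_three_distinct hS2 hSa hSb hSc d1 d2 d3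
    · right; left
      have hba : (lcis b a).length = (lcis a b).length := by rw [lcis_comm]
      have h3 : (lcis b a).length < (lcis a c).length := by rw [hba]; exact h2
      have := lcis_trans (Ne.symm hab) hlab.symm h3
      exact ⟨by rw [this], h3⟩
  · right; right
    have hcb : (lcis c b).length = (lcis b c).length := by rw [lcis_comm]
    have hba : (lcis b a).length = (lcis a b).length := by rw [lcis_comm]
    have h3 : (lcis c b).length < (lcis b a).length := by rw [hcb, hba]; exact h
    have := lcis_trans (Ne.symm hbc) hlbc.symm h3
    have hca : (lcis c a).length = (lcis c b).length := by rw [this]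
    exact ⟨hca, by rw [hca, hcb]; exact h⟩

end Tree

end Aux

theorem stmt9 {I V : Type*} (A : ReducedHypergraph I V) (r : ℕ) (hr : 2 ≤ r) :
    ContainsFortress A r 2 ↔ HasClique A (2 ^ r) := by
  classical
  constructor
  · -- fortress → clique
    rintro ⟨T, e, hT, hinj, Pv, hPv1, hPv2⟩
    obtain ⟨F, hFcoe, hFcard⟩ := level_card hT r le_rfl
    have hFleaves : (↑F : Set (List ℕ)) = leaves r T := hFcoe
    set J : Finset I := F.image e with hJ
    have hJcard : J.card = 2 ^ r := by
      rw [hJ, Finset.card_image_of_injOn (by rw [hFleaves]; exact hinj), hFcard]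
    have hlcisT : ∀ a ∈ leaves r T, ∀ b : List ℕ, lcis a b ∈ T := by
      intro a ha b
      rw [lcis_take]
      exact take_mem hT ha.1 _
    set theD : List ℕ → List ℕ :=
      fun c => if h : (Qset T c).Nonempty then h.choose else [] with hD
    have hDmem : ∀ c ∈ T, theD c ∈ Qset T c := by
      intro c hc
      have h := Qset_nonempty hT hc
      simp only [hD]
      rw [dif_pos h]
      exact h.choose_spec
    set g : List ℕ → List ℕ → V := fun a b => Pv a b (theD (lcis a b)) with hgdef
    have hgsymm : ∀ a ∈ leaves r T, ∀ b ∈ leaves r T, a ≠ b → g a b = g b a := by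
      intro a ha b hb hab
      have h1 := (hPv1 a ha b hb hab (theD (lcis a b)) (hDmem _ (hlcisT a ha b))).2
      simp only [hgdef]
      rw [h1]
      congr 1
      rw [lcis_comm]
    have key : ∀ x ∈ leaves r T, ∀ y ∈ leaves r T, ∀ z ∈ leaves r T,
        x ≠ y → x ≠ z → y ≠ z →
        (lcis x y).length = (lcis x z).length → (lcis x y).length < (lcis y z).length →
        A.Edg (e x) (e y) (e z) (g x y) (g x z) (g y z) := by
      intro x hx y hy z hz hxy hxz hyz hlen hlt
      have hsx : (lcis x y).length < x.length := lcis_lt_of_ne x y (by rw [hx.2, hy.2]) hxy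
      have hsy : (lcis x y).length < y.length :=
        lt_of_lt_of_le hlt (lcis_length_le y z)
      have hyzT : lcis y z ∈ T := hlcisT y hy z
      have hd := hDmem _ hyzT
      set d := theD (lcis y z) with hdd
      obtain ⟨hdm, hdn⟩ := hd.2 (lcis x y).length hlt
      have ht2 : x.take (lcis x y).length = y.take (lcis x y).length :=
        (lcis_take x y).symm.trans (lcis_take' x y)
      have ht1 : (lcis y z).take (lcis x y).length = y.take (lcis x y).length := by
        conv_lhs => rw [lcis_take y z]
        rw [List.take_take, min_eq_left hlt.le]
      have hgetyz : (lcis y z).getD (lcis x y).length 0 = y.getD (lcis x y).length 0 := by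
        conv_lhs => rw [lcis_take y z]
        exact getD_take_eq hlt
      obtain ⟨_, hS2, hSx⟩ := succ_spec hT hx.1 hsx
      have hdmem : d.getD (lcis x y).length 0 ∈
          {τ : ℕ | x.take (lcis x y).length ++ [τ] ∈ T} := by
        have h0 : (lcis y z).take (lcis x y).length ++ [d.getD (lcis x y).length 0] ∈ T :=
          hdm
        rw [ht1, ← ht2] at h0
        exact h0
      have hyin : y.getD (lcis x y).length 0 ∈
          {τ : ℕ | x.take (lcis x y).length ++ [τ] ∈ T} := by
        have h0 := (succ_spec hT hy.1 hsy).2.2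
        rwa [← ht2] at h0
      have hdny : d.getD (lcis x y).length 0 ≠ y.getD (lcis x y).length 0 := by
        rw [← hgetyz]; exact hdn
      have hxny : x.getD (lcis x y).length 0 ≠ y.getD (lcis x y).length 0 :=
        lcis_getD_ne x y hsx hsy
      have hdx : d.getD (lcis x y).length 0 = x.getD (lcis x y).length 0 :=
        two_unique hS2 hyin hdmem hSx hdny hxny
      have hedge := hPv2 x hx y hy z hz hxy hxz hyz hlen hlt d hd hdx
      have e1 : d.take (lcis x y).length ∈ Qset T (lcis x y) := by
        have h0 := Qset_take hd hlt.le
        have h1 : (lcis y z).take (lcis x y).length = lcis x y :=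
          ht1.trans (lcis_take' x y).symm
        rwa [h1] at h0
      have e2 : theD (lcis x y) = d.take (lcis x y).length :=
        Qset_unique hT (hlcisT x hx y) (hDmem _ (hlcisT x hx y)) e1
      have e3 : lcis x z = lcis x y := by
        have h0 := lcis_take x z
        rw [← hlen] at h0
        exact h0.trans (lcis_take x y).symm
      simp only [hgdef]
      rw [e3, e2, ← hdd]
      exact hedge
    set a0 : I → List ℕ := fun i => Function.invFunOn e (leaves r T) i with ha0
    have ha0spec : ∀ i ∈ J, a0 i ∈ leaves r T ∧ e (a0 i) = i := by
      intro i hi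
      rw [hJ, Finset.mem_image] at hi
      obtain ⟨l, hlF, hle⟩ := hi
      have hl : l ∈ leaves r T := by rw [← hFleaves]; exact hlF
      have hex : ∃ x ∈ leaves r T, e x = i := ⟨l, hl, hle⟩
      exact ⟨Function.invFunOn_mem hex, Function.invFunOn_eq hex⟩
    have ha0ne : ∀ i ∈ J, ∀ j ∈ J, i ≠ j → a0 i ≠ a0 j := by
      intro i hi j hj hij h
      exact hij (by rw [← (ha0spec i hi).2, ← (ha0spec j hj).2, h])
    set f : I → I → V := fun i j => if h : i ∈ J ∧ j ∈ J ∧ i ≠ j then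
        g (a0 i) (a0 j) else Pv [] [] [] with hfdef
    have hfpos : ∀ i j, i ∈ J → j ∈ J → i ≠ j → f i j = g (a0 i) (a0 j) := by
      intro i j hi hj hij
      simp only [hfdef]
      rw [dif_pos ⟨hi, hj, hij⟩]
    refine ⟨J, f, hJcard, ?_, ?_, ?_⟩
    · intro i j
      by_cases h : i ∈ J ∧ j ∈ J ∧ i ≠ j
      · rw [hfpos i j h.1 h.2.1 h.2.2, hfpos j i h.2.1 h.1 h.2.2.symm]
        exact hgsymm _ (ha0spec i h.1).1 _ (ha0spec j h.2.1).1
          (ha0ne i h.1 j h.2.1 h.2.2)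
      · have h' : ¬(j ∈ J ∧ i ∈ J ∧ j ≠ i) := fun hh => h ⟨hh.2.1, hh.1, hh.2.2.symm⟩
        simp only [hfdef]
        rw [dif_neg h, dif_neg h']
    · intro i hi j hj hij
      rw [hfpos i j hi hj hij]
      have hai := (ha0spec i hi).1
      have haj := (ha0spec j hj).1
      have hne := ha0ne i hi j hj hij
      have h0 := (hPv1 _ hai _ haj hne (theD (lcis (a0 i) (a0 j)))
        (hDmem _ (hlcisT _ hai (a0 j)))).1
      rw [(ha0spec i hi).2, (ha0spec j hj).2] at h0
      exact h0
    · intro i hi j hj k hk hij hik hjk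
      have hai := (ha0spec i hi).1
      have haj := (ha0spec j hj).1
      have hak := (ha0spec k hk).1
      have hab := ha0ne i hi j hj hij
      have hac := ha0ne i hi k hk hik
      have hbc := ha0ne j hj k hk hjk
      have hei := (ha0spec i hi).2
      have hej := (ha0spec j hj).2
      have hek := (ha0spec k hk).2
      rw [hfpos i j hi hj hij, hfpos i k hi hk hik, hfpos j k hj hk hjk]
      rcases three_point hT hai haj hak hab hac hbc with ⟨h1, h2⟩ | ⟨h1, h2⟩ | ⟨h1, h2⟩
      · have h0 := key _ hai _ haj _ hak hab hac hbc h1 h2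
        rwa [hei, hej, hek] at h0
      · have h0 := key _ haj _ hai _ hak hab.symm hbc hac h1 h2
        have h3 := A.Edg_symm12 _ _ _ _ _ _ h0
        rw [hgsymm _ haj _ hai hab.symm] at h3
        rwa [hei, hej, hek] at h3
      · have h0 := key _ hak _ hai _ haj hac.symm hbc.symm hab h1 h2
        have h3 := A.Edg_symm12 _ _ _ _ _ _ h0
        have h4 := A.Edg_symm23 _ _ _ _ _ _ h3
        rw [hgsymm _ hak _ hai hac.symm, hgsymm _ hak _ haj hbc.symm] at h4
        rwa [hei, hej, hek] at h4
  · -- clique → fortress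
    rintro ⟨J, f, hcard, hfsymm, hfmem, hfedge⟩
    set T : Set (List ℕ) := {l | l.length ≤ r ∧ ∀ x ∈ l, x < 2} with hTdef
    have hT : IsMAryTree 2 r T := by
      refine ⟨⟨by simp, by simp⟩, fun a ha => ha.1, ?_, ?_⟩
      · intro a ha i hi
        exact ⟨le_trans (by simp) ha.1,
          fun x hx => ha.2 x ((List.take_sublist i a).subset hx)⟩
      · intro a ha hlen
        have hset : {σ : ℕ | a ++ [σ] ∈ T} = {0, 1} := by
          ext σ
          simp only [hTdef, Set.mem_setOf_eq, Set.mem_insert_iff, Set.mem_singleton_iff]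
          constructor
          · rintro ⟨_, h2⟩
            have := h2 σ (by simp)
            omega
          · intro h
            refine ⟨by simp; omega, ?_⟩
            intro x hx
            rcases List.mem_append.mp hx with hx | hx
            · exact ha.2 x hx
            · simp only [List.mem_singleton] at hx
              omega
        rw [hset]
        exact ⟨Set.toFinite _, Set.ncard_pair (by norm_num)⟩
    obtain ⟨F, hFcoe, hFcard⟩ := level_card hT r le_rfl
    have hFleaves : (↑F : Set (List ℕ)) = leaves r T := hFcoe
    have hJne : J.Nonempty := Finset.card_pos.mp (by rw [hcard]; positivity)
    obtain ⟨i0, hi0⟩ := hJne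
    have heq : F.card = J.card := by rw [hFcard, hcard]
    set eqv := Finset.equivOfCardEq heq with heqv
    set e : List ℕ → I := fun l =>
      if h : l ∈ F then ((eqv ⟨l, h⟩ : {x // x ∈ J}) : I) else i0 with he
    have heF : ∀ l (h : l ∈ F), e l = ((eqv ⟨l, h⟩ : {x // x ∈ J}) : I) := by
      intro l h
      simp only [he]
      rw [dif_pos h]
    have heJ : ∀ l (h : l ∈ F), e l ∈ J := by
      intro l h
      rw [heF l h]
      exact (eqv ⟨l, h⟩).2
    have hmemF : ∀ l ∈ leaves r T, l ∈ F := by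
      intro l hl
      rw [← Finset.mem_coe, hFleaves]
      exact hl
    have hinj : Set.InjOn e (leaves r T) := by
      intro x hx y hy hxy
      have hxF := hmemF x hx
      have hyF := hmemF y hy
      rw [heF x hxF, heF y hyF] at hxy
      have h0 := eqv.injective (Subtype.coe_injective hxy)
      simpa using h0
    refine ⟨T, e, hT, hinj, fun a b _ => f (e a) (e b), ?_, ?_⟩
    · intro a ha b hb hab d _
      have hne : e a ≠ e b := fun h => hab (hinj ha hb h)
      exact ⟨hfmem _ (heJ a (hmemF a ha)) _ (heJ b (hmemF b hb)) hne, hfsymm _ _⟩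
    · intro a ha b hb c hc hab hac hbc _ _ d _ _
      exact hfedge _ (heJ a (hmemF a ha)) _ (heJ b (hmemF b hb)) _ (heJ c (hmemF c hc))
        (fun h => hab (hinj ha hb h)) (fun h => hac (hinj ha hc h))
        (fun h => hbc (hinj hb hc h))
end

section
/- Let r, m ≥ 2 be integers and ε > 0. Suppose X_0, X_1, …, X_{r−1} are pairwise disjoint subsets of the index set of a reduced hypergraph A, where |X_0| = m, and for each j ∈ [r−1] the collection C_j = {P^{xy} : x ∈ X_0, y ∈ X_j} is a ((r−2)/(r−1) + ε)-admissible (X_0, X_j)-selection. Then there exists a collection C = {P^{xx'} ∈ P^{xx'} : x, x' ∈ X_0, x ≠ x'} such that for every j ∈ [r−1], the set Y_j(C) = {y ∈ X_j : {P^{xx'}, P^{xy}, P^{x'y}} ∈ E(A^{xx'y}) for all distinct x, x' ∈ X_0} satisfies |Y_j(C)| ≥ (ε/2)^{C(m,2)} · |X_j|, where C(m,2) = m(m−1)/2. -/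
/-- A `d`-admissible `(X, Y)`-selection: vertices `C x y ∈ P x y` for `x ∈ X`, `y ∈ Y`
such that for all distinct `x, x' ∈ X` and every `y ∈ Y`, the pair-degree of `C x y`
and `C x' y` in `P x x'` is at least `d·|P x x'|`. -/
def Admissible {I V : Type*} (A : ReducedHypergraph I V) (d : ℝ)
    (X Y : Set I) (C : I → I → V) : Prop :=
  (∀ x ∈ X, ∀ y ∈ Y, C x y ∈ A.P x y) ∧
  (∀ x ∈ X, ∀ x' ∈ X, x ≠ x' → ∀ y ∈ Y,
    d * ((A.P x x').ncard : ℝ) ≤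
      (({p ∈ A.P x x' | A.Edg x x' y p (C x y) (C x' y)}).ncard : ℝ))

open Finset in
lemma countlem {α β : Type*} [DecidableEq α] (r : ℕ) (hr : 2 ≤ r) (ε : ℝ) (hε : 0 < ε)
    (P : Finset α) (hP : P.Nonempty) (J : Finset ℕ) (hJ : J.card + 1 ≤ r)
    (Y : ℕ → Finset β) (N : ℕ → β → Finset α)
    (hNP : ∀ j ∈ J, ∀ y ∈ Y j, N j y ⊆ P)
    (hdeg : ∀ j ∈ J, ∀ y ∈ Y j,
      (((r:ℝ) - 2)/((r:ℝ)-1) + ε) * P.card ≤ ((N j y).card : ℝ)) :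
    ∃ p ∈ P, ∀ j ∈ J, (ε/2) * ((Y j).card : ℝ) ≤
      (((Y j).filter (fun y => p ∈ N j y)).card : ℝ) := by
  classical
  by_cases hYall : ∀ j ∈ J, Y j = ∅
  · obtain ⟨p, hp⟩ := hP
    exact ⟨p, hp, fun j hj => by simp [hYall j hj]⟩
  push_neg at hYall
  obtain ⟨j0, hj0, hY0⟩ := hYall
  obtain ⟨y0, hy0⟩ := hY0
  set d : ℝ := ((r:ℝ) - 2)/((r:ℝ)-1) + ε with hd
  have hr1 : (1:ℝ) ≤ (r:ℝ) - 1 := by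
    have : (2:ℝ) ≤ (r:ℝ) := by exact_mod_cast hr
    linarith
  have hr1' : (0:ℝ) < (r:ℝ) - 1 := by linarith
  have hPpos : (0:ℝ) < P.card := by
    exact_mod_cast Finset.card_pos.2 hP
  have hd1 : d ≤ 1 := by
    have h1 := hdeg j0 hj0 y0 hy0
    have h2 : ((N j0 y0).card : ℝ) ≤ P.card := by
      exact_mod_cast Finset.card_le_card (hNP j0 hj0 y0 hy0)
    nlinarith
  have heps : ε ≤ 1/((r:ℝ)-1) := by
    rw [hd] at hd1
    have : ((r:ℝ)-2)/((r:ℝ)-1) = 1 - 1/((r:ℝ)-1) := by field_simp; ring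
    rw [this] at hd1; linarith
  have heps1 : ε ≤ 1 := le_trans heps (by rw [div_le_one hr1']; linarith)
  have hhalf : (0:ℝ) < 1 - ε/2 := by linarith
  set Bad : ℕ → Finset α := fun j => P.filter
    (fun p => (((Y j).filter (fun y => p ∈ N j y)).card : ℝ) < (ε/2) * (Y j).card) with hBad
  have claim2 : ∀ j ∈ J, ((Bad j).card : ℝ) ≤ (1 - d)/(1 - ε/2) * P.card := by
    intro j hj
    by_cases hYe : Y j = ∅
    · have hB : Bad j = ∅ := by
        rw [hBad]
        refine Finset.filter_eq_empty_iff.2 ?_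
        intro p _
        simp [hYe]
      rw [hB]
      simp only [Finset.card_empty, Nat.cast_zero]
      exact mul_nonneg (div_nonneg (by linarith) (by linarith)) (by positivity)
    · have hYpos : (0:ℝ) < (Y j).card := by
        exact_mod_cast Finset.card_pos.2 (Finset.nonempty_iff_ne_empty.2 hYe)
      have hfe : ∀ y ∈ Y j, P.filter (fun p => p ∈ N j y) = N j y := fun y hy => by
        rw [Finset.filter_mem_eq_inter, Finset.inter_eq_right.2 (hNP j hj y hy)]
      have hswap : ∑ p ∈ P, ((Y j).filter (fun y => p ∈ N j y)).card
          = ∑ y ∈ Y j, (N j y).card := by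
        calc ∑ p ∈ P, ((Y j).filter (fun y => p ∈ N j y)).card
            = ∑ p ∈ P, ∑ y ∈ Y j, if p ∈ N j y then 1 else 0 :=
              Finset.sum_congr rfl fun p _ => Finset.card_filter _ _
          _ = ∑ y ∈ Y j, ∑ p ∈ P, if p ∈ N j y then 1 else 0 := Finset.sum_comm
          _ = ∑ y ∈ Y j, (N j y).card := Finset.sum_congr rfl fun y hy => by
              rw [← Finset.card_filter, hfe y hy]
      have hedge : d * P.card * (Y j).card ≤
          ∑ p ∈ P, (((Y j).filter (fun y => p ∈ N j y)).card : ℝ) := by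
        have hc : ∑ p ∈ P, (((Y j).filter (fun y => p ∈ N j y)).card : ℝ)
            = ∑ y ∈ Y j, ((N j y).card : ℝ) := by exact_mod_cast hswap
        rw [hc]
        calc d * P.card * (Y j).card = ∑ _y ∈ Y j, d * P.card := by
              rw [Finset.sum_const, nsmul_eq_mul]; ring
          _ ≤ ∑ y ∈ Y j, ((N j y).card : ℝ) :=
              Finset.sum_le_sum fun y hy => hdeg j hj y hy
      have claim1 : ((Bad j).card : ℝ) * ((1 - ε/2) * (Y j).card)
          ≤ (1 - d) * P.card * (Y j).card := by
        have e1 : ((Bad j).card : ℝ) * ((1 - ε/2) * (Y j).card)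
            = ∑ _p ∈ Bad j, (1 - ε/2) * ((Y j).card : ℝ) := by
          rw [Finset.sum_const, nsmul_eq_mul]
        have e2 : ∑ _p ∈ Bad j, ((1 - ε/2) * ((Y j).card : ℝ))
            ≤ ∑ p ∈ Bad j, (((Y j).card : ℝ) - ((Y j).filter (fun y => p ∈ N j y)).card) := by
          refine Finset.sum_le_sum fun p hp => ?_
          have hlt := (Finset.mem_filter.1 hp).2
          linarith
        have e3 : ∑ p ∈ Bad j, (((Y j).card : ℝ) - ((Y j).filter (fun y => p ∈ N j y)).card)
            ≤ ∑ p ∈ P, (((Y j).card : ℝ) - ((Y j).filter (fun y => p ∈ N j y)).card) := by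
          refine Finset.sum_le_sum_of_subset_of_nonneg (Finset.filter_subset _ _) ?_
          intro p _ _
          have : ((((Y j).filter (fun y => p ∈ N j y)).card : ℕ) : ℝ) ≤ (Y j).card := by
            exact_mod_cast Finset.card_le_card (Finset.filter_subset _ _)
          linarith
        have e4 : ∑ p ∈ P, (((Y j).card : ℝ) - ((Y j).filter (fun y => p ∈ N j y)).card)
            = (P.card : ℝ) * (Y j).card - ∑ p ∈ P, (((Y j).filter (fun y => p ∈ N j y)).card : ℝ) := by
          rw [Finset.sum_sub_distrib, Finset.sum_const, nsmul_eq_mul]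
        calc ((Bad j).card : ℝ) * ((1 - ε/2) * (Y j).card)
            = ∑ _p ∈ Bad j, (1 - ε/2) * ((Y j).card : ℝ) := e1
          _ ≤ ∑ p ∈ Bad j, (((Y j).card : ℝ) - ((Y j).filter (fun y => p ∈ N j y)).card) := e2
          _ ≤ ∑ p ∈ P, (((Y j).card : ℝ) - ((Y j).filter (fun y => p ∈ N j y)).card) := e3
          _ = (P.card : ℝ) * (Y j).card - ∑ p ∈ P, (((Y j).filter (fun y => p ∈ N j y)).card : ℝ) := e4
          _ ≤ (P.card : ℝ) * (Y j).card - d * P.card * (Y j).card := by linarith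
          _ = (1 - d) * P.card * (Y j).card := by ring
      rw [div_mul_eq_mul_div, le_div_iff₀ hhalf]
      nlinarith
  have hsum : ((J.biUnion Bad).card : ℝ) < P.card := by
    have h1 : ((J.biUnion Bad).card : ℝ) ≤ ∑ j ∈ J, ((Bad j).card : ℝ) := by
      exact_mod_cast Finset.card_biUnion_le
    have h2 : ∑ j ∈ J, ((Bad j).card : ℝ) ≤ J.card * ((1-d)/(1-ε/2) * P.card) := by
      calc ∑ j ∈ J, ((Bad j).card : ℝ) ≤ ∑ _j ∈ J, (1-d)/(1-ε/2) * P.card :=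
            Finset.sum_le_sum claim2
        _ = J.card * ((1-d)/(1-ε/2) * P.card) := by rw [Finset.sum_const, nsmul_eq_mul]
    have hJr : (J.card : ℝ) ≤ (r:ℝ) - 1 := by
      have : (J.card : ℝ) + 1 ≤ (r:ℝ) := by exact_mod_cast hJ
      linarith
    have h1d : 1 - d = 1/((r:ℝ)-1) - ε := by
      rw [hd]
      have : ((r:ℝ)-2)/((r:ℝ)-1) = 1 - 1/((r:ℝ)-1) := by field_simp; ring
      rw [this]; ring
    have hkey : ((r:ℝ)-1) * (1-d) < 1 - ε/2 := by
      rw [h1d]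
      have he : ((r:ℝ)-1) * (1/((r:ℝ)-1) - ε) = 1 - ((r:ℝ)-1)*ε := by field_simp
      rw [he]
      nlinarith
    have h1dnn : 0 ≤ 1 - d := by linarith
    have h3 : (J.card : ℝ) * ((1-d)/(1-ε/2) * P.card) < P.card := by
      have hle : (J.card : ℝ) * ((1-d)/(1-ε/2) * P.card)
          ≤ ((r:ℝ)-1) * ((1-d)/(1-ε/2) * P.card) := by
        apply mul_le_mul_of_nonneg_right hJr
        exact mul_nonneg (div_nonneg h1dnn (by linarith)) (by positivity)
      have hlt : ((r:ℝ)-1) * ((1-d)/(1-ε/2) * P.card) < P.card := by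
        rw [show ((r:ℝ)-1) * ((1-d)/(1-ε/2) * P.card)
            = (((r:ℝ)-1)*(1-d))/(1-ε/2) * P.card by ring]
        have hq : (((r:ℝ)-1)*(1-d))/(1-ε/2) < 1 := by
          rw [div_lt_one hhalf]; exact hkey
        nlinarith
      linarith
    linarith
  have hns : ¬ P ⊆ J.biUnion Bad := by
    intro hsub
    have h := Finset.card_le_card hsub
    have : (P.card : ℝ) ≤ ((J.biUnion Bad).card : ℝ) := by exact_mod_cast h
    linarith
  obtain ⟨p, hpP, hpB⟩ := Finset.not_subset.1 hns
  refine ⟨p, hpP, fun j hj => ?_⟩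
  by_contra hlt
  push_neg at hlt
  exact hpB (Finset.mem_biUnion.2 ⟨j, hj, Finset.mem_filter.2 ⟨hpP, hlt⟩⟩)

lemma steplem {I V : Type*} (A : ReducedHypergraph I V) (r : ℕ) (hr : 2 ≤ r)
    (ε : ℝ) (hε : 0 < ε) (X : ℕ → Set I) (hfin : ∀ j ≤ r - 1, (X j).Finite)
    (Cs : ℕ → I → I → V)
    (hadm : ∀ j, 1 ≤ j → j ≤ r - 1 →
      Admissible A (((r : ℝ) - 2) / ((r : ℝ) - 1) + ε) (X 0) (X j) (Cs j))
    (v0 : V) :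
    ∀ S : Finset (I × I), (∀ q ∈ S, q.1 ∈ X 0 ∧ q.2 ∈ X 0 ∧ q.1 ≠ q.2) →
    ∃ f : I → I → V, (∀ q ∈ S, f q.1 q.2 ∈ A.P q.1 q.2) ∧
      ∀ j, 1 ≤ j → j ≤ r - 1 →
        (ε/2)^S.card * ((X j).ncard : ℝ) ≤
          (({y ∈ X j | ∀ q ∈ S, A.Edg q.1 q.2 y (f q.1 q.2) (Cs j q.1 y) (Cs j q.2 y)}).ncard : ℝ) := by
  classical
  intro S
  induction S using Finset.induction_on with
  | empty =>
    intro _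
    refine ⟨fun _ _ => v0, by simp, fun j h1 h2 => ?_⟩
    have hset : {y ∈ X j | ∀ q ∈ (∅ : Finset (I × I)),
        A.Edg q.1 q.2 y v0 (Cs j q.1 y) (Cs j q.2 y)} = X j := by
      ext y; simp
    rw [hset]
    simp
  | @insert q S' hq ih =>
    intro hS
    obtain ⟨ha, hb, hab⟩ := hS q (Finset.mem_insert_self q S')
    obtain ⟨f, hfmem, hcount⟩ := ih (fun q' hq' => hS q' (Finset.mem_insert_of_mem hq'))
    obtain ⟨a, b⟩ := q
    -- Finset versions
    set Pab : Finset V := (A.Pfin a b).toFinset with hPab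
    have hPne : Pab.Nonempty := (Set.Finite.toFinset_nonempty _).2 (A.Pne a b hab)
    set Yset : ℕ → Set I := fun j => {y ∈ X j | ∀ q' ∈ S',
      A.Edg q'.1 q'.2 y (f q'.1 q'.2) (Cs j q'.1 y) (Cs j q'.2 y)} with hYset
    have hYfin : ∀ j ≤ r - 1, (Yset j).Finite :=
      fun j hj => (hfin j hj).subset (Set.sep_subset _ _)
    set Yfin : ℕ → Finset I := fun j => if h : j ≤ r - 1 then (hYfin j h).toFinset else ∅
      with hYfin'
    set N : ℕ → I → Finset V := fun j y =>
      Pab.filter (fun p => A.Edg a b y p (Cs j a y) (Cs j b y)) with hN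
    have hJcard : (Finset.Icc 1 (r-1)).card + 1 ≤ r := by
      rw [Nat.card_Icc]; omega
    have hmemY : ∀ j ∈ Finset.Icc 1 (r-1), ∀ y ∈ Yfin j, y ∈ Yset j := by
      intro j hj y hy
      rw [Finset.mem_Icc] at hj
      rw [hYfin'] at hy
      simp only [dif_pos hj.2] at hy
      exact (Set.Finite.mem_toFinset _).1 hy
    have hdeg : ∀ j ∈ Finset.Icc 1 (r-1), ∀ y ∈ Yfin j,
        (((r:ℝ) - 2)/((r:ℝ)-1) + ε) * Pab.card ≤ ((N j y).card : ℝ) := by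
      intro j hj y hy
      have hj' := Finset.mem_Icc.1 hj
      have hyX : y ∈ X j := (hmemY j hj y hy).1
      have h2 := (hadm j hj'.1 hj'.2).2 a ha b hb hab y hyX
      have hc1 : (A.P a b).ncard = Pab.card := by
        rw [hPab, Set.ncard_eq_toFinset_card (A.P a b) (A.Pfin a b)]
      have hc2 : ({p ∈ A.P a b | A.Edg a b y p (Cs j a y) (Cs j b y)}).ncard
          = (N j y).card := by
        rw [← Set.ncard_coe_finset]
        congr 1
        ext p
        simp [hN, hPab, Set.Finite.mem_toFinset]
      rw [hc1, hc2] at h2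
      exact h2
    obtain ⟨p, hpP, hgood⟩ := countlem r hr ε hε Pab hPne (Finset.Icc 1 (r-1)) hJcard
      Yfin N (fun j _ y _ => Finset.filter_subset _ _) hdeg
    set f' : I → I → V := fun x y => if (x, y) = (a, b) then p else f x y with hf'
    have hf'ab : f' a b = p := by simp [hf']
    have hf'S : ∀ q' ∈ S', f' q'.1 q'.2 = f q'.1 q'.2 := by
      intro q' hq'
      rw [hf']
      simp only
      rw [if_neg]
      intro h
      apply hq
      have he : q' = (a, b) := by rw [← h]
      rwa [he] at hq'
    refine ⟨f', ?_, ?_⟩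
    · intro q' hq'
      rcases Finset.mem_insert.1 hq' with h | h
      · subst h
        simp only [hf'ab]
        exact (Set.Finite.mem_toFinset _).1 hpP
      · rw [hf'S q' h]
        exact hfmem q' h
    · intro j h1 h2
      have hjI : j ∈ Finset.Icc 1 (r-1) := Finset.mem_Icc.2 ⟨h1, h2⟩
      have hYeq : Yfin j = (hYfin j h2).toFinset := by rw [hYfin']; simp [h2]
      -- the new good set
      have hseteq : {y ∈ X j | ∀ q' ∈ insert (a, b) S',
            A.Edg q'.1 q'.2 y (f' q'.1 q'.2) (Cs j q'.1 y) (Cs j q'.2 y)}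
          = ↑((Yfin j).filter (fun y => p ∈ N j y)) := by
        ext y
        simp only [Finset.coe_filter, Set.mem_setOf_eq, Finset.mem_coe, hYeq,
          Set.Finite.mem_toFinset, Finset.mem_filter]
        constructor
        · rintro ⟨hyX, hall⟩
          refine ⟨⟨hyX, fun q' hq' => ?_⟩, ?_⟩
          · rw [← hf'S q' hq']
            exact hall q' (Finset.mem_insert_of_mem hq')
          · rw [hN]
            simp only [Finset.mem_filter]
            refine ⟨hpP, ?_⟩
            have := hall (a, b) (Finset.mem_insert_self _ _)
            rwa [hf'ab] at this
        · rintro ⟨⟨hyX, hall⟩, hpN⟩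
          refine ⟨hyX, fun q' hq' => ?_⟩
          rcases Finset.mem_insert.1 hq' with h | h
          · subst h
            rw [hf'ab]
            rw [hN] at hpN
            exact (Finset.mem_filter.1 hpN).2
          · rw [hf'S q' h]
            exact hall q' h
      rw [hseteq, Set.ncard_coe_finset]
      have hYcard : ((Yset j).ncard : ℝ) = ((Yfin j).card : ℝ) := by
        rw [hYeq, Set.ncard_eq_toFinset_card _ (hYfin j h2)]
      calc (ε/2)^(insert (a,b) S').card * ((X j).ncard : ℝ)
          = (ε/2) * ((ε/2)^S'.card * ((X j).ncard : ℝ)) := by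
            rw [Finset.card_insert_of_notMem hq, pow_succ]; ring
        _ ≤ (ε/2) * ((Yset j).ncard : ℝ) := by
            apply mul_le_mul_of_nonneg_left (hcount j h1 h2) (by positivity)
        _ = (ε/2) * ((Yfin j).card : ℝ) := by rw [hYcard]
        _ ≤ (((Yfin j).filter (fun y => p ∈ N j y)).card : ℝ) := hgood j hjI

theorem stmt11 {I V : Type*} (A : ReducedHypergraph I V) (r m : ℕ)
    (hr : 2 ≤ r) (hm : 2 ≤ m) (ε : ℝ) (hε : 0 < ε)
    (X : ℕ → Set I) (hfin : ∀ j ≤ r - 1, (X j).Finite)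
    (hdisj : ∀ j ≤ r - 1, ∀ j' ≤ r - 1, j ≠ j' → Disjoint (X j) (X j'))
    (hX0 : (X 0).ncard = m)
    (Cs : ℕ → I → I → V)
    (hadm : ∀ j, 1 ≤ j → j ≤ r - 1 →
      Admissible A (((r : ℝ) - 2) / ((r : ℝ) - 1) + ε) (X 0) (X j) (Cs j)) :
    ∃ C : I → I → V,
      (∀ x ∈ X 0, ∀ x' ∈ X 0, x ≠ x' → C x x' ∈ A.P x x' ∧ C x x' = C x' x) ∧
      ∀ j, 1 ≤ j → j ≤ r - 1 →
        (ε / 2) ^ (m * (m - 1) / 2) * ((X j).ncard : ℝ) ≤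
          (({y ∈ X j | ∀ x ∈ X 0, ∀ x' ∈ X 0, x ≠ x' →
              A.Edg x x' y (C x x') (Cs j x y) (Cs j x' y)}).ncard : ℝ) := by
  classical
  have h0 : 0 ≤ r - 1 := Nat.zero_le _
  -- two distinct elements of X 0
  have hX0fin : (X 0).Finite := hfin 0 h0
  have h2card : 1 < (X 0).ncard := by omega
  obtain ⟨a0, b0, ha0, hb0, hne0⟩ := (Set.one_lt_ncard_iff hX0fin).1 h2card
  obtain ⟨v0, hv0⟩ := A.Pne a0 b0 hne0
  set T : Finset I := hX0fin.toFinset with hT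
  have hTcard : T.card = m := by
    rw [hT, ← Set.ncard_eq_toFinset_card _ hX0fin, hX0]
  set R : I → I → Prop := WellOrderingRel with hR
  have hasymm : ∀ x y : I, R x y → ¬ R y x := fun x y h => asymm h
  have htri : ∀ x y : I, x ≠ y → ¬ R x y → R y x := by
    intro x y hxy hnR
    rcases trichotomous_of WellOrderingRel x y with h | h | h
    · exact absurd h hnR
    · exact absurd h hxy
    · exact h
  set Q : Finset (I × I) := T.offDiag.filter (fun q => R q.1 q.2) with hQ
  have hQmem : ∀ q ∈ Q, q.1 ∈ X 0 ∧ q.2 ∈ X 0 ∧ q.1 ≠ q.2 := by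
    intro q hq
    obtain ⟨hod, _⟩ := Finset.mem_filter.1 hq
    obtain ⟨h1, h2, h3⟩ := Finset.mem_offDiag.1 hod
    rw [hT] at h1 h2
    exact ⟨(Set.Finite.mem_toFinset _).1 h1, (Set.Finite.mem_toFinset _).1 h2, h3⟩
  -- card of Q
  have hQcard : Q.card = m * (m - 1) / 2 := by
    set Q' : Finset (I × I) := T.offDiag.filter (fun q => ¬ R q.1 q.2) with hQ'
    have hsplit : Q.card + Q'.card = T.offDiag.card := by
      rw [hQ, hQ']
      exact Finset.card_filter_add_card_filter_not _
    have hbij : Q.card = Q'.card := by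
      apply Finset.card_bij (fun q _ => q.swap)
      · intro q hq
        obtain ⟨hod, hRq⟩ := Finset.mem_filter.1 hq
        obtain ⟨h1, h2, h3⟩ := Finset.mem_offDiag.1 hod
        refine Finset.mem_filter.2 ⟨Finset.mem_offDiag.2 ⟨h2, h1, h3.symm⟩, ?_⟩
        exact hasymm _ _ hRq
      · intro q1 h1 q2 h2 hsw
        exact Prod.swap_injective hsw
      · intro q' hq'
        obtain ⟨hod, hRq⟩ := Finset.mem_filter.1 hq'
        obtain ⟨h1, h2, h3⟩ := Finset.mem_offDiag.1 hod
        refine ⟨q'.swap, Finset.mem_filter.2 ⟨Finset.mem_offDiag.2 ⟨h2, h1, h3.symm⟩, ?_⟩, ?_⟩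
        · exact htri _ _ h3 hRq
        · exact (Prod.swap_swap q').symm
    have hod : T.offDiag.card = m * m - m := by rw [Finset.offDiag_card, hTcard]
    have hmm : m * (m - 1) = m * m - m := by rw [Nat.mul_sub, Nat.mul_one]
    omega
  obtain ⟨f, hfmem, hcount⟩ := steplem A r hr ε hε X hfin Cs hadm v0 Q hQmem
  set C : I → I → V := fun x y => if R x y then f x y else f y x with hC
  have hCmem : ∀ x ∈ X 0, ∀ x' ∈ X 0, x ≠ x' →
      (R x x' → ((x, x') ∈ Q ∧ C x x' = f x x' ∧ C x' x = f x x')) := by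
    intro x hx x' hx' hxx' hRx
    have hmemQ : ((x, x') : I × I) ∈ Q := by
      refine Finset.mem_filter.2 ⟨Finset.mem_offDiag.2 ⟨?_, ?_, hxx'⟩, hRx⟩
      · exact (Set.Finite.mem_toFinset _).2 hx
      · exact (Set.Finite.mem_toFinset _).2 hx'
    refine ⟨hmemQ, ?_, ?_⟩
    · rw [hC]; simp only [if_pos hRx]
    · rw [hC]; simp only [if_neg (hasymm _ _ hRx)]
  refine ⟨C, ?_, ?_⟩
  · intro x hx x' hx' hxx'
    by_cases hRx : R x x'
    · obtain ⟨hmemQ, hC1, hC2⟩ := hCmem x hx x' hx' hxx' hRx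
      rw [hC1, hC2]
      exact ⟨hfmem (x, x') hmemQ, rfl⟩
    · have hRx' := htri _ _ hxx' hRx
      obtain ⟨hmemQ, hC1, hC2⟩ := hCmem x' hx' x hx hxx'.symm hRx'
      rw [hC1, hC2]
      refine ⟨?_, rfl⟩
      rw [A.Psymm]
      exact hfmem (x', x) hmemQ
  · intro j h1 h2
    have hsub : {y ∈ X j | ∀ q ∈ Q, A.Edg q.1 q.2 y (f q.1 q.2) (Cs j q.1 y) (Cs j q.2 y)}
        ⊆ {y ∈ X j | ∀ x ∈ X 0, ∀ x' ∈ X 0, x ≠ x' →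
            A.Edg x x' y (C x x') (Cs j x y) (Cs j x' y)} := by
      rintro y ⟨hyX, hall⟩
      refine ⟨hyX, fun x hx x' hx' hxx' => ?_⟩
      by_cases hRx : R x x'
      · obtain ⟨hmemQ, hC1, _⟩ := hCmem x hx x' hx' hxx' hRx
        rw [hC1]
        exact hall (x, x') hmemQ
      · have hRx' := htri _ _ hxx' hRx
        obtain ⟨hmemQ, hC1, hC2⟩ := hCmem x' hx' x hx hxx'.symm hRx'
        rw [hC2]
        exact A.Edg_symm12 x' x y (f x' x) (Cs j x' y) (Cs j x y) (hall (x', x) hmemQ)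
    have hfin2 : {y ∈ X j | ∀ x ∈ X 0, ∀ x' ∈ X 0, x ≠ x' →
        A.Edg x x' y (C x x') (Cs j x y) (Cs j x' y)}.Finite :=
      (hfin j h2).subset (Set.sep_subset _ _)
    have hmono := Set.ncard_le_ncard hsub hfin2
    have hc := hcount j h1 h2
    rw [hQcard] at hc
    calc (ε / 2) ^ (m * (m - 1) / 2) * ((X j).ncard : ℝ)
        ≤ (({y ∈ X j | ∀ q ∈ Q,
            A.Edg q.1 q.2 y (f q.1 q.2) (Cs j q.1 y) (Cs j q.2 y)}).ncard : ℝ) := hc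
      _ ≤ _ := by exact_mod_cast hmono
end

section
/- Let P = (X ∪ Y ∪ Z, E) be a tripartite graph in which each of the three bipartite graphs P[X,Y], P[X,Z], P[Y,Z] is (δ₂, d₂)-regular. Then the number of triangles satisfies |K₃(P)| ≤ d₂³·|X||Y||Z| + 3δ₂·|X||Y||Z|. -/
lemma ncard_cast_eq_sum' {α : Type*} [Fintype α] (s : Set α) [DecidablePred (· ∈ s)] :
    ((s.ncard : ℝ)) = ∑ a, if a ∈ s then (1:ℝ) else 0 := by
  have : s.ncard = (Finset.univ.filter (· ∈ s)).card := by
    rw [Set.ncard_eq_toFinset_card']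
    congr 1
    ext a
    simp
  rw [this, Finset.card_filter]
  push_cast
  rfl

lemma ite_and3' (p q r : Prop) [Decidable p] [Decidable q] [Decidable r] :
    (if p ∧ q ∧ r then (1:ℝ) else 0) =
      (if p then (1:ℝ) else 0) * (if q then (1:ℝ) else 0) * (if r then (1:ℝ) else 0) := by
  by_cases hp : p <;> by_cases hq : q <;> by_cases hr : r <;> simp [*]


/-- A bipartite graph between the finite vertex sets `X` and `Y`, given by the adjacency
relation `E`, is `(δ, d)`-regular if for all `X' ⊆ X` and `Y' ⊆ Y` the number of edges
between `X'` and `Y'` differs from `d·|X'|·|Y'|` by at most `δ·|X|·|Y|`. -/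
def BipRegular {X Y : Type*} [Fintype X] [Fintype Y] (δ d : ℝ) (E : X → Y → Prop) : Prop :=
  ∀ X' : Set X, ∀ Y' : Set Y,
    |(({p : X × Y | p.1 ∈ X' ∧ p.2 ∈ Y' ∧ E p.1 p.2}).ncard : ℝ) -
        d * (X'.ncard : ℝ) * (Y'.ncard : ℝ)| ≤
      δ * (Fintype.card X : ℝ) * (Fintype.card Y : ℝ)

theorem stmt18 {X Y Z : Type*} [Fintype X] [Fintype Y] [Fintype Z]
    (δ d : ℝ) (hδ : 0 ≤ δ) (hd0 : 0 ≤ d) (hd1 : d ≤ 1)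
    (Exy : X → Y → Prop) (Exz : X → Z → Prop) (Eyz : Y → Z → Prop)
    (hxy : BipRegular δ d Exy) (hxz : BipRegular δ d Exz) (hyz : BipRegular δ d Eyz) :
    (({t : X × Y × Z | Exy t.1 t.2.1 ∧ Exz t.1 t.2.2 ∧ Eyz t.2.1 t.2.2}).ncard : ℝ) ≤
      d ^ 3 * (Fintype.card X : ℝ) * (Fintype.card Y : ℝ) * (Fintype.card Z : ℝ) +
        3 * δ * (Fintype.card X : ℝ) * (Fintype.card Y : ℝ) * (Fintype.card Z : ℝ) := by
  classical
  set nX := (Fintype.card X : ℝ) with hnX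
  set nY := (Fintype.card Y : ℝ) with hnY
  set nZ := (Fintype.card Z : ℝ) with hnZ
  have hnX0 : 0 ≤ nX := by positivity
  have hnY0 : 0 ≤ nY := by positivity
  have hnZ0 : 0 ≤ nZ := by positivity
  set f : X → Y → ℝ := fun x y => if Exy x y then 1 else 0 with hf
  set g : X → Z → ℝ := fun x z => if Exz x z then 1 else 0 with hg
  set h : Y → Z → ℝ := fun y z => if Eyz y z then 1 else 0 with hh
  -- triangle count as a sum
  have hT : (({t : X × Y × Z | Exy t.1 t.2.1 ∧ Exz t.1 t.2.2 ∧ Eyz t.2.1 t.2.2}).ncard : ℝ)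
      = ∑ x, ∑ y, ∑ z, f x y * g x z * h y z := by
    rw [ncard_cast_eq_sum', Fintype.sum_prod_type]
    refine Finset.sum_congr rfl fun x _ => ?_
    rw [Fintype.sum_prod_type]
    refine Finset.sum_congr rfl fun y _ => Finset.sum_congr rfl fun z _ => ?_
    simp only [Set.mem_setOf_eq]
    exact ite_and3' _ _ _
  rw [hT]
  -- per-x bound from hyz
  have hx : ∀ x : X, ∑ y, ∑ z, f x y * g x z * h y z
      ≤ d * ((∑ y, f x y) * (∑ z, g x z)) + δ * nY * nZ := by
    intro x
    have h1 := hyz {y | Exy x y} {z | Exz x z}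
    have e1 : (({p : Y × Z | p.1 ∈ {y | Exy x y} ∧ p.2 ∈ {z | Exz x z} ∧ Eyz p.1 p.2}).ncard : ℝ)
        = ∑ y, ∑ z, f x y * g x z * h y z := by
      rw [ncard_cast_eq_sum', Fintype.sum_prod_type]
      refine Finset.sum_congr rfl fun y _ => Finset.sum_congr rfl fun z _ => ?_
      simp only [Set.mem_setOf_eq]
      exact ite_and3' _ _ _
    have e2 : (({y | Exy x y} : Set Y).ncard : ℝ) = ∑ y, f x y := by
      rw [ncard_cast_eq_sum']
      simp [hf]
    have e3 : (({z | Exz x z} : Set Z).ncard : ℝ) = ∑ z, g x z := by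
      rw [ncard_cast_eq_sum']
      simp [hg]
    rw [e1, e2, e3] at h1
    have := (abs_le.mp h1).2
    nlinarith [this]
  -- per-z bound from hxy
  have hz : ∀ z : Z, ∑ x, g x z * (∑ y, f x y)
      ≤ d * (∑ x, g x z) * nY + δ * nX * nY := by
    intro z
    have h1 := hxy {x | Exz x z} Set.univ
    have e1 : (({p : X × Y | p.1 ∈ {x | Exz x z} ∧ p.2 ∈ (Set.univ : Set Y) ∧ Exy p.1 p.2}).ncard : ℝ)
        = ∑ x, g x z * (∑ y, f x y) := by
      rw [ncard_cast_eq_sum', Fintype.sum_prod_type]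
      refine Finset.sum_congr rfl fun x _ => ?_
      rw [Finset.mul_sum]
      refine Finset.sum_congr rfl fun y _ => ?_
      simp only [Set.mem_setOf_eq, Set.mem_univ, true_and]
      by_cases h1 : Exz x z <;> by_cases h2 : Exy x y <;> simp [hf, hg, *]
    have e2 : (({x | Exz x z} : Set X).ncard : ℝ) = ∑ x, g x z := by
      rw [ncard_cast_eq_sum']
      simp [hg]
    have e3 : ((Set.univ : Set Y).ncard : ℝ) = nY := by
      rw [Set.ncard_univ, Nat.card_eq_fintype_card]
    rw [e1, e2, e3] at h1
    linarith [(abs_le.mp h1).2]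
  -- total edge bound from hxz
  have hE : ∑ z, ∑ x, g x z ≤ d * nX * nZ + δ * nX * nZ := by
    have h1 := hxz Set.univ Set.univ
    have e1 : (({p : X × Z | p.1 ∈ (Set.univ : Set X) ∧ p.2 ∈ (Set.univ : Set Z) ∧ Exz p.1 p.2}).ncard : ℝ)
        = ∑ x, ∑ z, g x z := by
      rw [ncard_cast_eq_sum', Fintype.sum_prod_type]
      refine Finset.sum_congr rfl fun x _ => Finset.sum_congr rfl fun z _ => ?_
      simp [hg]
    have e2 : ((Set.univ : Set X).ncard : ℝ) = nX := by
      rw [Set.ncard_univ, Nat.card_eq_fintype_card]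
    have e3 : ((Set.univ : Set Z).ncard : ℝ) = nZ := by
      rw [Set.ncard_univ, Nat.card_eq_fintype_card]
    rw [e1, e2, e3] at h1
    rw [Finset.sum_comm]
    linarith [(abs_le.mp h1).2]
  -- combine
  have step1 : ∑ x, ∑ y, ∑ z, f x y * g x z * h y z
      ≤ d * (∑ x, (∑ y, f x y) * (∑ z, g x z)) + δ * nX * nY * nZ := by
    calc ∑ x, ∑ y, ∑ z, f x y * g x z * h y z
        ≤ ∑ x : X, (d * ((∑ y, f x y) * (∑ z, g x z)) + δ * nY * nZ) :=
          Finset.sum_le_sum fun x _ => hx x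
      _ = d * (∑ x, (∑ y, f x y) * (∑ z, g x z)) + δ * nX * nY * nZ := by
          rw [Finset.sum_add_distrib, ← Finset.mul_sum, Finset.sum_const, Finset.card_univ,
            nsmul_eq_mul]
          ring
  have hS2eq : ∑ x, (∑ y, f x y) * (∑ z, g x z) = ∑ z, ∑ x, g x z * (∑ y, f x y) := by
    rw [← Finset.sum_comm]
    refine Finset.sum_congr rfl fun x _ => ?_
    rw [Finset.mul_sum]
    exact Finset.sum_congr rfl fun z _ => mul_comm _ _
  have step2 : ∑ x, (∑ y, f x y) * (∑ z, g x z)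
      ≤ d * nY * (∑ z, ∑ x, g x z) + δ * nX * nY * nZ := by
    rw [hS2eq]
    calc ∑ z, ∑ x, g x z * (∑ y, f x y)
        ≤ ∑ z : Z, (d * (∑ x, g x z) * nY + δ * nX * nY) :=
          Finset.sum_le_sum fun z _ => hz z
      _ = d * nY * (∑ z, ∑ x, g x z) + δ * nX * nY * nZ := by
          rw [Finset.sum_add_distrib, Finset.sum_const, Finset.card_univ, nsmul_eq_mul,
            Finset.mul_sum]
          congr 1
          · exact Finset.sum_congr rfl fun z _ => by ring
          · ring
  -- nonnegativity of the double sum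
  have hEnn : 0 ≤ ∑ z, ∑ x, g x z :=
    Finset.sum_nonneg fun z _ => Finset.sum_nonneg fun x _ => by
      simp only [hg]; split <;> norm_num
  have hS2nn : 0 ≤ ∑ x, (∑ y, f x y) * (∑ z, g x z) := by
    refine Finset.sum_nonneg fun x _ => mul_nonneg ?_ ?_ <;>
      exact Finset.sum_nonneg fun _ _ => by simp only [hf, hg]; split <;> norm_num
  nlinarith [mul_le_mul_of_nonneg_left step2 hd0, mul_le_mul_of_nonneg_left hE
      (mul_nonneg (mul_nonneg hd0 hd0) hnY0),
    mul_nonneg (mul_nonneg hδ hnX0) (mul_nonneg hnY0 hnZ0),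
    mul_nonneg hd0 (mul_nonneg (mul_nonneg hδ hnX0) (mul_nonneg hnY0 hnZ0)),
    mul_nonneg (mul_nonneg hd0 hd0) (mul_nonneg (mul_nonneg hδ hnX0) (mul_nonneg hnY0 hnZ0))]
end
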